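/- arXiv:1210.7997 — 5 statements merged into one kernel-verified Lean document; each statement's English description precedes it below -/
import Mathlib

section
/- For every integer l ≥ 3, the sum of ζ(l₁, l₂) over all integers l₁ ≥ 2, l₂ ≥ 1 with l₁ + l₂ = l equals ζ(l). -/
open scoped BigOperators
open scoped ENNReal
open Finset

/-- The double zeta value ζ(l₁, l₂) = ∑_{m₁ > m₂ > 0} 1/(m₁^l₁ m₂^l₂). -/
noncomputable def dzeta (l₁ l₂ : ℕ) : ℝ :=
  ∑' p : {q : ℕ+ × ℕ+ // q.2 < q.1}, 1 / ((p.1.1 : ℝ) ^ l₁ * (p.1.2 : ℝ) ^ l₂)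

/-- The Riemann zeta value ζ(l) = ∑_{m ≥ 1} 1/m^l. -/
noncomputable def zetav (l : ℕ) : ℝ := ∑' m : ℕ+, 1 / (m : ℝ) ^ l

/-- T_l(x,y) = ∑_{l₁ ≥ 2, l₂ ≥ 1, l₁+l₂=l} x^(l₁-1) y^(l₂-1) ζ(l₁,l₂). -/
noncomputable def Tl (l : ℕ) (x y : ℂ) : ℂ :=
  ∑ l₁ ∈ Finset.Icc 2 (l - 1), x ^ (l₁ - 1) * y ^ (l - l₁ - 1) * (dzeta l₁ (l - l₁) : ℂ)

noncomputable def omega : ℂ := Complex.exp (2 * Real.pi * Complex.I / 3)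

namespace EulerAux



/-- telescoping for finite sums in a monoid -/
lemma tele (t u : ℕ → ℝ≥0∞) :
    ∀ M : ℕ, (∀ i < M, u i + t (i + 1) = t i) →
      (∑ i ∈ range M, u i) + t M = t 0 := by
  intro M
  induction M with
  | zero => simp
  | succ M ih =>
    intro h
    rw [Finset.sum_range_succ, add_assoc, h M (by omega), ih (fun i hi => h i (by omega))]

/-- telescoping tail sum: ∑_{k≥0} 1/((j+k+1)(j+k+2)) = 1/(j+1) -/
lemma tail (j : ℕ) :
    HasSum (fun k : ℕ => (((j : ℝ) + k + 1) * ((j : ℝ) + k + 2))⁻¹) (((j : ℝ) + 1)⁻¹) := by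
  set g : ℕ → ℝ := fun i => ((j : ℝ) + i + 1)⁻¹ with hg
  have hpos : ∀ i : ℕ, (0:ℝ) < (j : ℝ) + i + 1 := by intro i; positivity
  have key : ∀ x : ℝ, 0 < x → (x * (x + 1))⁻¹ = x⁻¹ - (x + 1)⁻¹ := by
    intro x hx
    rw [inv_sub_inv hx.ne' (by positivity)]
    rw [add_sub_cancel_left]
    rw [one_div]
  have hterm : ∀ k : ℕ, (((j : ℝ) + k + 1) * ((j : ℝ) + k + 2))⁻¹ = g k - g (k + 1) := by
    intro k
    have := key ((j : ℝ) + k + 1) (hpos k)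
    have e2 : (j : ℝ) + k + 1 + 1 = (j : ℝ) + k + 2 := by ring
    rw [e2] at this
    rw [this, hg]
    push_cast
    ring_nf
  have hnn : ∀ k : ℕ, (0:ℝ) ≤ (((j : ℝ) + k + 1) * ((j : ℝ) + k + 2))⁻¹ := by
    intro k; positivity
  rw [hasSum_iff_tendsto_nat_of_nonneg hnn]
  have hps : ∀ K : ℕ, ∑ i ∈ range K, (((j : ℝ) + i + 1) * ((j : ℝ) + i + 2))⁻¹
      = g 0 - g K := by
    intro K
    rw [← Finset.sum_range_sub' g K]
    exact Finset.sum_congr rfl fun i _ => hterm i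
  simp only [hps]
  have hgK : Filter.Tendsto g Filter.atTop (nhds 0) := by
    apply Filter.Tendsto.inv_tendsto_atTop
    apply Filter.tendsto_atTop_add_const_right
    apply Filter.tendsto_atTop_add_const_left
    exact tendsto_natCast_atTop_atTop
  have := (tendsto_const_nhds (x := g 0)).sub hgK
  rw [sub_zero] at this
  convert this using 2
  simp [hg]



/-- ∑_{k≥0} 1/((k+1)(k+1+n)) = H_n / n -/
lemma harm (n : ℕ) (hn : 0 < n) :
    HasSum (fun k : ℕ => (((k : ℝ) + 1) * ((k : ℝ) + 1 + n))⁻¹)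
      ((∑ j ∈ range n, ((j : ℝ) + 1)⁻¹) / n) := by
  set g : ℕ → ℝ := fun i => ((i : ℝ) + 1)⁻¹ with hg
  have hgpos : ∀ i : ℕ, (0:ℝ) < ((i:ℝ) + 1) := by intro i; positivity
  have hnn : ∀ k : ℕ, (0:ℝ) ≤ (((k : ℝ) + 1) * ((k : ℝ) + 1 + n))⁻¹ := by
    intro k; positivity
  have hterm : ∀ k : ℕ, (((k : ℝ) + 1) * ((k : ℝ) + 1 + n))⁻¹ = (g k - g (k + n)) / n := by
    intro k
    rw [hg]
    have h1 : ((k:ℝ) + 1) ≠ 0 := (hgpos k).ne'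
    have h2 : (((k + n : ℕ):ℝ) + 1) ≠ 0 := (hgpos (k+n)).ne'
    have h3 : (n : ℝ) ≠ 0 := by positivity
    push_cast at h2 ⊢
    field_simp
    ring
  rw [hasSum_iff_tendsto_nat_of_nonneg hnn]
  -- partial sums
  have hps : ∀ K : ℕ, n ≤ K →
      ∑ i ∈ range K, (((i : ℝ) + 1) * ((i : ℝ) + 1 + n))⁻¹
        = ((∑ j ∈ range n, g j) - ∑ i ∈ Ico K (K + n), g i) / n := by
    intro K hK
    have e1 : ∑ i ∈ range K, (((i : ℝ) + 1) * ((i : ℝ) + 1 + n))⁻¹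
        = ((∑ i ∈ range K, g i) - ∑ i ∈ range K, g (i + n)) / n := by
      rw [Finset.sum_congr rfl fun i _ => hterm i, ← Finset.sum_div, Finset.sum_sub_distrib]
    have e2 : ∑ i ∈ range K, g (i + n) = ∑ i ∈ Ico n (n + K), g i := by
      rw [Finset.sum_Ico_eq_sum_range]
      simp only [add_tsub_cancel_left]
      exact Finset.sum_congr rfl fun i _ => by rw [add_comm]
    have e3 : (∑ i ∈ range n, g i) + ∑ i ∈ Ico n (n + K), g i
        = ∑ i ∈ range (n + K), g i := by
      rw [Finset.range_eq_Ico, Finset.range_eq_Ico]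
      exact Finset.sum_Ico_consecutive g (Nat.zero_le n) (Nat.le_add_right n K)
    have e4 : (∑ i ∈ range K, g i) + ∑ i ∈ Ico K (K + n), g i
        = ∑ i ∈ range (n + K), g i := by
      rw [Finset.range_eq_Ico, Finset.range_eq_Ico]
      rw [show n + K = K + n from by ring]
      exact Finset.sum_Ico_consecutive g (Nat.zero_le K) (Nat.le_add_right K n)
    rw [e1, e2]
    congr 1
    linarith [e3, e4]
  have htail : Filter.Tendsto (fun K => ∑ i ∈ Ico K (K + n), g i) Filter.atTop (nhds 0) := by
    have hb : ∀ K : ℕ, ∑ i ∈ Ico K (K + n), g i ≤ n * ((K:ℝ) + 1)⁻¹ := by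
      intro K
      calc ∑ i ∈ Ico K (K + n), g i ≤ ∑ _i ∈ Ico K (K + n), ((K:ℝ) + 1)⁻¹ := by
            apply Finset.sum_le_sum
            intro i hi
            rw [hg]
            apply inv_anti₀ (hgpos K)
            have h := (Finset.mem_Ico.mp hi).1
            have h2 : (K:ℝ) ≤ (i:ℝ) := Nat.cast_le.mpr h
            linarith
        _ = n * ((K:ℝ) + 1)⁻¹ := by
            rw [Finset.sum_const, Nat.card_Ico]
            simp
    have h0 : ∀ K : ℕ, (0:ℝ) ≤ ∑ i ∈ Ico K (K + n), g i := by
      intro K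
      apply Finset.sum_nonneg
      intro i _
      rw [hg]
      positivity
    apply squeeze_zero h0 hb
    have : Filter.Tendsto (fun K : ℕ => ((K:ℝ) + 1)⁻¹) Filter.atTop (nhds 0) := by
      apply Filter.Tendsto.inv_tendsto_atTop
      apply Filter.tendsto_atTop_add_const_right
      exact tendsto_natCast_atTop_atTop
    simpa using this.const_mul (n : ℝ)
  have hlim : Filter.Tendsto
      (fun K => ((∑ j ∈ range n, g j) - ∑ i ∈ Ico K (K + n), g i) / n)
      Filter.atTop (nhds ((∑ j ∈ range n, g j) / n)) := by
    have := ((tendsto_const_nhds (x := ∑ j ∈ range n, g j)).sub htail).div_const (n:ℝ)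
    rw [sub_zero] at this
    exact this
  apply Filter.Tendsto.congr' _ hlim
  filter_upwards [Filter.eventually_ge_atTop n] with K hK
  exact (hps K hK).symm



/-- reindexing the set  m > n  by (n, k) ↦ (n+k, n) -/
def eGrid : ℕ+ × ℕ+ ≃ {q : ℕ+ × ℕ+ // q.2 < q.1} where
  toFun p := ⟨(p.1 + p.2, p.1), by
    show p.1 < p.1 + p.2
    exact PNat.lt_add_right p.1 p.2⟩
  invFun q := (q.1.2, q.1.1 - q.1.2)
  left_inv p := by
    have h : p.1 + p.2 - p.1 = p.2 := by
      apply PNat.coe_injective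
      rw [PNat.sub_coe]
      rw [if_pos]
      · rw [PNat.add_coe]; omega
      · exact PNat.lt_add_right p.1 p.2
    exact Prod.ext rfl h
  right_inv q := by
    apply Subtype.ext
    have hlt := q.2
    rw [← PNat.coe_lt_coe] at hlt
    apply Prod.ext
    · show q.1.2 + (q.1.1 - q.1.2) = q.1.1
      apply PNat.coe_injective
      rw [PNat.add_coe, PNat.sub_coe, if_pos q.2]
      omega
    · rfl

lemma tsum_grid (f : ℕ+ → ℕ+ → ℝ≥0∞) :
    ∑' p : {q : ℕ+ × ℕ+ // q.2 < q.1}, f p.1.1 p.1.2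
      = ∑' p : ℕ+ × ℕ+, f (p.1 + p.2) p.1 :=
  (eGrid.tsum_eq (fun p : {q : ℕ+ × ℕ+ // q.2 < q.1} => f p.1.1 p.1.2)).symm

/-- fibering the set m > n over m -/
def eFib : (Σ _m : ℕ+, Fin ((_m : ℕ) - 1)) ≃ {q : ℕ+ × ℕ+ // q.2 < q.1} where
  toFun x := ⟨(x.1, Nat.succPNat x.2.val), by
    show Nat.succPNat x.2.val < x.1
    have := x.2.isLt
    rw [← PNat.coe_lt_coe, Nat.succPNat_coe]
    omega⟩
  invFun q := ⟨q.1.1, ⟨(q.1.2 : ℕ) - 1, by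
    have hlt : ((q.1.2:ℕ)) < ((q.1.1:ℕ)) := q.2
    have h2 : 0 < ((q.1.2:ℕ)) := q.1.2.2
    omega⟩⟩
  left_inv x := by
    apply Sigma.ext rfl
    simp [Nat.succPNat]
  right_inv q := by
    apply Subtype.ext
    obtain ⟨⟨m, n⟩, h⟩ := q
    show (m, Nat.succPNat ((n : ℕ) - 1)) = (m, n)
    have h2 : 0 < ((n:ℕ)) := n.2
    have hn : Nat.succPNat ((n : ℕ) - 1) = n := by
      apply PNat.coe_injective
      rw [Nat.succPNat_coe]
      omega
    rw [hn]

lemma tsum_fiber (f : ℕ+ → ℕ+ → ℝ≥0∞) :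
    ∑' p : {q : ℕ+ × ℕ+ // q.2 < q.1}, f p.1.1 p.1.2
      = ∑' m : ℕ+, ∑ j ∈ range ((m : ℕ) - 1), f m (Nat.succPNat j) := by
  rw [← eFib.tsum_eq (fun p : {q : ℕ+ × ℕ+ // q.2 < q.1} => f p.1.1 p.1.2)]
  have : (fun x : Σ _m : ℕ+, Fin ((_m : ℕ) - 1) =>
      f (eFib x).1.1 (eFib x).1.2) = fun x => f x.1 (Nat.succPNat x.2.val) := rfl
  rw [this]
  refine (ENNReal.tsum_sigma'
    (fun x : (Σ _m : ℕ+, Fin ((_m:ℕ) - 1)) => f x.1 (Nat.succPNat x.2.val))).trans ?_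
  congr 1
  funext m
  rw [tsum_fintype]
  exact Fin.sum_univ_eq_sum_range (fun j => f m (Nat.succPNat j)) ((m:ℕ) - 1)

/-- swap coordinates in a double tsum over a product -/
lemma tsum_swap (f : ℕ+ → ℕ+ → ℝ≥0∞) :
    ∑' p : ℕ+ × ℕ+, f p.1 p.2 = ∑' p : ℕ+ × ℕ+, f p.2 p.1 := by
  rw [ENNReal.tsum_prod, ENNReal.tsum_comm, ← ENNReal.tsum_prod]

/-- transfer: tsum over ℕ+ of an `ofReal` family with real HasSum -/
lemma tsum_pnat_eq {f : ℕ+ → ℝ≥0∞} {g : ℕ → ℝ}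
    (hf : ∀ k : ℕ, f k.succPNat = ENNReal.ofReal (g k))
    (hg0 : ∀ k, 0 ≤ g k) {s : ℝ} (hs : HasSum g s) :
    ∑' k : ℕ+, f k = ENNReal.ofReal s := by
  rw [← Equiv.pnatEquivNat.symm.tsum_eq f]
  have : (fun k : ℕ => f (Equiv.pnatEquivNat.symm k)) = fun k => ENNReal.ofReal (g k) := by
    funext k
    exact hf k
  rw [this, ← ENNReal.ofReal_tsum_of_nonneg hg0 hs.summable, hs.tsum_eq]

lemma tsum_pnat_le {f : ℕ+ → ℝ≥0∞} {g h : ℕ → ℝ}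
    (hf : ∀ k : ℕ, f k.succPNat = ENNReal.ofReal (g k))
    (hg0 : ∀ k, 0 ≤ g k) (hgh : ∀ k, g k ≤ h k) {s : ℝ} (hs : HasSum h s) :
    ∑' k : ℕ+, f k ≤ ENNReal.ofReal s := by
  have hgsum : Summable g := hs.summable.of_nonneg_of_le hg0 hgh
  rw [tsum_pnat_eq hf hg0 hgsum.hasSum]
  apply ENNReal.ofReal_le_ofReal
  rw [← hs.tsum_eq]
  exact Summable.tsum_le_tsum hgh hgsum hs.summable



noncomputable def pe (n : ℕ+) : ℝ≥0∞ := ((n : ℕ) : ℝ≥0∞)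

lemma pe_ne_zero (n : ℕ+) : pe n ≠ 0 := by
  simp only [pe, ne_eq, Nat.cast_eq_zero]
  exact n.pos.ne'

lemma pe_ne_top (n : ℕ+) : pe n ≠ ⊤ := ENNReal.natCast_ne_top _

lemma pe_add (n k : ℕ+) : pe (n + k) = pe n + pe k := by
  simp [pe, PNat.add_coe]

lemma pe_toReal (n : ℕ+) : (pe n).toReal = ((n:ℕ):ℝ) := by simp [pe]

lemma pe_pos_toReal (n : ℕ+) : (0:ℝ) < (pe n).toReal := by
  rw [pe_toReal]
  exact_mod_cast n.pos

lemma pe_succPNat (j : ℕ) : pe (Nat.succPNat j) = ((j:ℝ≥0∞) + 1) := by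
  simp only [pe, Nat.succPNat_coe]
  push_cast
  ring

/-- `1/x + 1/y = 1/z` in `ℝ≥0∞` from the real identity -/
lemma inv_add_inv_e {x y z : ℝ≥0∞} (hx0 : x ≠ 0) (hxt : x ≠ ⊤) (hy0 : y ≠ 0) (hyt : y ≠ ⊤)
    (hz0 : z ≠ 0) (h : x.toReal⁻¹ + y.toReal⁻¹ = z.toReal⁻¹) : x⁻¹ + y⁻¹ = z⁻¹ := by
  rw [← ENNReal.toReal_eq_toReal_iff'
      (ENNReal.add_ne_top.mpr ⟨ENNReal.inv_ne_top.mpr hx0, ENNReal.inv_ne_top.mpr hy0⟩)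
      (ENNReal.inv_ne_top.mpr hz0)]
  rw [ENNReal.toReal_add (ENNReal.inv_ne_top.mpr hx0) (ENNReal.inv_ne_top.mpr hy0),
    ENNReal.toReal_inv, ENNReal.toReal_inv, ENNReal.toReal_inv]
  exact h

/-- the basic telescoping step -/
lemma step1 (n k : ℕ+) (i j : ℕ) :
    ((pe n + pe k) ^ (i+2) * pe n ^ (j+1))⁻¹
      + (pe k * (pe n + pe k) ^ (i+2) * pe n ^ j)⁻¹
    = (pe k * (pe n + pe k) ^ (i+1) * pe n ^ (j+1))⁻¹ := by
  have hM0 : pe n + pe k ≠ 0 := by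
    intro h
    exact pe_ne_zero n (by simpa using (add_eq_zero.mp h).1)
  have hMt : pe n + pe k ≠ ⊤ := ENNReal.add_ne_top.mpr ⟨pe_ne_top n, pe_ne_top k⟩
  apply inv_add_inv_e
  · exact mul_ne_zero (pow_ne_zero _ hM0) (pow_ne_zero _ (pe_ne_zero n))
  · exact ENNReal.mul_ne_top (ENNReal.pow_ne_top hMt) (ENNReal.pow_ne_top (pe_ne_top n))
  · exact mul_ne_zero (mul_ne_zero (pe_ne_zero k) (pow_ne_zero _ hM0)) (pow_ne_zero _ (pe_ne_zero n))
  · exact ENNReal.mul_ne_top (ENNReal.mul_ne_top (pe_ne_top k) (ENNReal.pow_ne_top hMt))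
      (ENNReal.pow_ne_top (pe_ne_top n))
  · exact mul_ne_zero (mul_ne_zero (pe_ne_zero k) (pow_ne_zero _ hM0)) (pow_ne_zero _ (pe_ne_zero n))
  · -- real identity
    have hN := pe_pos_toReal n
    have hK := pe_pos_toReal k
    have hMR : ((pe n + pe k).toReal) = (pe n).toReal + (pe k).toReal :=
      ENNReal.toReal_add (pe_ne_top n) (pe_ne_top k)
    set N := (pe n).toReal
    set K := (pe k).toReal
    simp only [ENNReal.toReal_mul, ENNReal.toReal_pow, hMR]
    have hM : (0:ℝ) < N + K := by linarith
    have hN0 : N ≠ 0 := hN.ne'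
    have hK0 : K ≠ 0 := hK.ne'
    have hM0' : N + K ≠ 0 := hM.ne'
    simp only [N, K] at *
    field_simp
    ring

/-- splitting for the A-sum -/
lemma stepA (n k : ℕ+) (c : ℕ) :
    (pe k * (pe n + pe k) * pe n ^ (c+1))⁻¹
      = (pe n ^ (c+1))⁻¹ * (pe k * (pe k + pe n))⁻¹ := by
  rw [show pe k * (pe n + pe k) * pe n ^ (c+1) = pe n ^ (c+1) * (pe k * (pe k + pe n)) by ring]
  rw [ENNReal.mul_inv (Or.inl (pow_ne_zero _ (pe_ne_zero n)))
    (Or.inl (ENNReal.pow_ne_top (pe_ne_top n)))]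


/-- the exact harmonic evaluation: ∑_{k≥1} 1/(k(k+n)) = H_n / n -/
lemma harmE (n : ℕ+) :
    ∑' k : ℕ+, (pe k * (pe k + pe n))⁻¹
      = (∑ j ∈ range (n:ℕ), (pe (Nat.succPNat j))⁻¹) * (pe n)⁻¹ := by
  have hn : 0 < (n:ℕ) := n.pos
  have hres := harm (n:ℕ) hn
  have heq := tsum_pnat_eq (f := fun k => (pe k * (pe k + pe n))⁻¹)
      (g := fun k : ℕ => (((k : ℝ) + 1) * ((k : ℝ) + 1 + (n:ℕ)))⁻¹)
      (fun k => by
        show (pe k.succPNat * (pe k.succPNat + pe n))⁻¹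
          = ENNReal.ofReal ((((k : ℝ) + 1) * ((k : ℝ) + 1 + (n:ℕ)))⁻¹)
        have hpos : (0:ℝ) < ((k : ℝ) + 1) * ((k : ℝ) + 1 + (n:ℕ)) := by positivity
        rw [ENNReal.ofReal_inv_of_pos hpos]
        congr 1
        rw [show ((k : ℝ) + 1) * ((k : ℝ) + 1 + (n:ℕ)) = (((k+1) * (k+1+(n:ℕ)) : ℕ) : ℝ) by
          push_cast; ring]
        rw [ENNReal.ofReal_natCast]
        simp only [pe_succPNat, pe, Nat.succPNat_coe]
        push_cast
        ring)
      (fun k => by positivity) hres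
  rw [heq]
  rw [ENNReal.ofReal_div_of_pos (by exact_mod_cast hn)]
  rw [div_eq_mul_inv]
  congr 1
  · rw [ENNReal.ofReal_sum_of_nonneg (fun j _ => by positivity)]
    apply Finset.sum_congr rfl
    intro j _
    rw [ENNReal.ofReal_inv_of_pos (by positivity)]
    rw [show ((j:ℝ) + 1) = (((j+1 : ℕ)) : ℝ) by push_cast; ring, ENNReal.ofReal_natCast]
    rw [pe_succPNat]
    push_cast
    ring
  · rw [ENNReal.ofReal_natCast]
    rfl

/-- tail estimate : ∑_{k≥1} 1/(j+k)^2 ≤ 1/j -/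
lemma tailE (j : ℕ+) :
    ∑' k : ℕ+, (((pe j + pe k)) ^ 2)⁻¹ ≤ (pe j)⁻¹ := by
  have hj : 0 < (j:ℕ) := j.pos
  have hj1 : (1:ℝ) ≤ ((j:ℕ):ℝ) := by exact_mod_cast hj
  have hsum : HasSum (fun k : ℕ => ((((j:ℕ):ℝ) + k) * (((j:ℕ):ℝ) + k + 1))⁻¹)
      ((((j:ℕ):ℝ))⁻¹) := by
    have htail := tail ((j:ℕ) - 1)
    have hcast : ((((j:ℕ) - 1 : ℕ)):ℝ) = ((j:ℕ):ℝ) - 1 := by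
      rw [Nat.cast_sub hj]
      norm_num
    rw [hcast] at htail
    have h4 : ∀ k : ℕ, ((((j:ℕ):ℝ) - 1) + k + 1) * ((((j:ℕ):ℝ) - 1) + k + 2)
        = (((j:ℕ):ℝ) + k) * (((j:ℕ):ℝ) + k + 1) := fun k => by ring
    simp only [h4] at htail
    rw [show (((j:ℕ):ℝ) - 1) + 1 = ((j:ℕ):ℝ) by ring] at htail
    exact htail
  have hle := tsum_pnat_le (f := fun k => (((pe j + pe k)) ^ 2)⁻¹)
      (g := fun k : ℕ => (((((j:ℕ):ℝ) + k + 1)) ^ 2)⁻¹)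
      (h := fun k : ℕ => ((((j:ℕ):ℝ) + k) * (((j:ℕ):ℝ) + k + 1))⁻¹)
      (fun k => by
        show ((pe j + pe k.succPNat) ^ 2)⁻¹
          = ENNReal.ofReal (((((j:ℕ):ℝ) + k + 1)) ^ 2)⁻¹
        have hpos : (0:ℝ) < (((j:ℕ):ℝ) + k + 1) ^ 2 := by positivity
        rw [ENNReal.ofReal_inv_of_pos hpos]
        congr 1
        rw [show ((((j:ℕ):ℝ) + k + 1)) ^ 2 = ((((j:ℕ) + (k+1))^2 : ℕ) : ℝ) by push_cast; ring]
        rw [ENNReal.ofReal_natCast]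
        simp only [pe_succPNat, pe, Nat.succPNat_coe]
        push_cast
        ring)
      (fun k => by positivity)
      (fun k => by
        apply inv_anti₀ (by positivity)
        nlinarith [Nat.cast_nonneg (α := ℝ) k])
      hsum
  calc ∑' k : ℕ+, (((pe j + pe k)) ^ 2)⁻¹ ≤ ENNReal.ofReal ((((j:ℕ):ℝ))⁻¹) := hle
    _ = (pe j)⁻¹ := by
        rw [ENNReal.ofReal_inv_of_pos (by exact_mod_cast hj), ENNReal.ofReal_natCast]
        rfl

/-- ζ(2) is finite (crude bound) -/
lemma zeta2E : ∑' k : ℕ+, ((pe k) ^ 2)⁻¹ ≤ ENNReal.ofReal 2 := by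
  have hsum : HasSum (fun k : ℕ => 2 * (((k:ℝ) + 1) * ((k:ℝ) + 2))⁻¹) (2:ℝ) := by
    have := (tail 0).mul_left 2
    simp only [Nat.cast_zero, zero_add, inv_one, mul_one] at this
    exact this
  apply tsum_pnat_le (g := fun k : ℕ => ((((k:ℝ) + 1)) ^ 2)⁻¹)
      (h := fun k : ℕ => 2 * (((k:ℝ) + 1) * ((k:ℝ) + 2))⁻¹)
      (fun k => by
        show ((pe k.succPNat) ^ 2)⁻¹ = ENNReal.ofReal ((((k:ℝ) + 1)) ^ 2)⁻¹
        have hpos : (0:ℝ) < ((k:ℝ) + 1) ^ 2 := by positivity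
        rw [ENNReal.ofReal_inv_of_pos hpos]
        congr 1
        rw [show (((k:ℝ) + 1)) ^ 2 = (((k+1)^2 : ℕ) : ℝ) by push_cast; ring]
        rw [ENNReal.ofReal_natCast]
        rw [pe_succPNat]
        push_cast
        ring)
      (fun k => by positivity)
      (fun k => by
        show (((k:ℝ) + 1) ^ 2)⁻¹ ≤ 2 * (((k:ℝ) + 1) * ((k:ℝ) + 2))⁻¹
        have hpos : (0:ℝ) < ((k:ℝ) + 1) * ((k:ℝ) + 2) := by positivity
        rw [inv_eq_one_div,
          show (2:ℝ) * (((k:ℝ)+1) * ((k:ℝ)+2))⁻¹ = 2 / (((k:ℝ)+1) * ((k:ℝ)+2)) from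
            (div_eq_mul_inv _ _).symm,
          div_le_div_iff₀ (by positivity) hpos]
        nlinarith [Nat.cast_nonneg (α := ℝ) k])
      hsum

noncomputable def Dz (a b : ℕ) : ℝ≥0∞ :=
  ∑' p : {q : ℕ+ × ℕ+ // q.2 < q.1}, (pe p.1.1 ^ a * pe p.1.2 ^ b)⁻¹

noncomputable def Zz (l : ℕ) : ℝ≥0∞ := ∑' m : ℕ+, (pe m ^ l)⁻¹

lemma dzeta_eq (a b : ℕ) : dzeta a b = (Dz a b).toReal := by
  rw [Dz, ENNReal.tsum_toReal_eq (fun p => ENNReal.inv_ne_top.mpr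
    (mul_ne_zero (pow_ne_zero _ (pe_ne_zero _)) (pow_ne_zero _ (pe_ne_zero _))))]
  rw [dzeta]
  apply tsum_congr
  intro p
  rw [ENNReal.toReal_inv, ENNReal.toReal_mul, ENNReal.toReal_pow, ENNReal.toReal_pow,
    pe_toReal, pe_toReal, one_div]

lemma zetav_eq (l : ℕ) : zetav l = (Zz l).toReal := by
  rw [Zz, ENNReal.tsum_toReal_eq (fun m => ENNReal.inv_ne_top.mpr
    (pow_ne_zero _ (pe_ne_zero _)))]
  rw [zetav]
  apply tsum_congr
  intro m
  rw [ENNReal.toReal_inv, ENNReal.toReal_pow, pe_toReal, one_div]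

lemma Zz_le (l : ℕ) (hl : 2 ≤ l) : Zz l ≤ ENNReal.ofReal 2 := by
  refine le_trans (ENNReal.tsum_le_tsum fun m => ?_) zeta2E
  apply ENNReal.inv_le_inv.mpr
  exact pow_le_pow_right₀ (by
    rw [pe]
    exact Nat.one_le_cast.mpr m.pos) hl

lemma Zz_ne_top (l : ℕ) (hl : 2 ≤ l) : Zz l ≠ ⊤ :=
  (lt_of_le_of_lt (Zz_le l hl) ENNReal.ofReal_lt_top).ne

/-- B is the (fiberwise) double-zeta ζ(c+2,1) -/
lemma B_fiber (c : ℕ) :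
    ∑' p : ℕ+ × ℕ+, (pe p.2 * (pe p.1 + pe p.2) ^ (c+2))⁻¹
      = ∑' m : ℕ+, ∑ j ∈ range ((m:ℕ) - 1), (pe (Nat.succPNat j) * pe m ^ (c+2))⁻¹ := by
  have h1 : ∑' p : ℕ+ × ℕ+, (pe p.2 * (pe p.1 + pe p.2) ^ (c+2))⁻¹
      = ∑' p : ℕ+ × ℕ+, (pe p.1 * (pe p.1 + pe p.2) ^ (c+2))⁻¹ := by
    rw [tsum_swap (fun a b => (pe b * (pe a + pe b) ^ (c+2))⁻¹)]
    exact tsum_congr fun p => by rw [add_comm]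
  rw [h1]
  have h2 := tsum_grid (fun m x => (pe x * pe m ^ (c+2))⁻¹)
  have h3 : ∑' p : ℕ+ × ℕ+, (pe p.1 * (pe p.1 + pe p.2) ^ (c+2))⁻¹
      = ∑' p : ℕ+ × ℕ+, (pe p.1 * pe (p.1 + p.2) ^ (c+2))⁻¹ :=
    tsum_congr fun p => by rw [pe_add]
  rw [h3, ← h2]
  exact tsum_fiber (fun m x => (pe x * pe m ^ (c+2))⁻¹)

/-- B is finite -/
lemma B_fin (c : ℕ) :
    ∑' p : ℕ+ × ℕ+, (pe p.2 * (pe p.1 + pe p.2) ^ (c+2))⁻¹ ≠ ⊤ := by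
  have hle2 : ∑' p : ℕ+ × ℕ+, (pe p.2 * (pe p.1 + pe p.2) ^ (c+2))⁻¹
      ≤ ∑' p : ℕ+ × ℕ+, (pe p.2 * (pe p.1 + pe p.2) ^ 2)⁻¹ := by
    apply ENNReal.tsum_le_tsum
    intro p
    apply ENNReal.inv_le_inv.mpr
    apply mul_le_mul_right
    apply pow_le_pow_right₀ _ (by omega)
    calc (1:ℝ≥0∞) ≤ pe p.1 := by rw [pe]; exact Nat.one_le_cast.mpr p.1.pos
      _ ≤ pe p.1 + pe p.2 := le_self_add
  have hswap : ∑' p : ℕ+ × ℕ+, (pe p.2 * (pe p.1 + pe p.2) ^ 2)⁻¹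
      = ∑' a : ℕ+, ∑' b : ℕ+, (pe a * (pe a + pe b) ^ 2)⁻¹ := by
    rw [tsum_swap (fun a b => (pe b * (pe a + pe b) ^ 2)⁻¹)]
    rw [ENNReal.tsum_prod (f := fun a b => (pe a * (pe b + pe a) ^ 2)⁻¹)]
    exact tsum_congr fun a => tsum_congr fun b => by rw [add_comm (pe b) (pe a)]
  have hinner : ∀ a : ℕ+, ∑' b : ℕ+, (pe a * (pe a + pe b) ^ 2)⁻¹ ≤ (pe a ^ 2)⁻¹ := by
    intro a
    have : ∀ b : ℕ+, (pe a * (pe a + pe b) ^ 2)⁻¹ = (pe a)⁻¹ * ((pe a + pe b) ^ 2)⁻¹ :=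
      fun b => ENNReal.mul_inv (Or.inl (pe_ne_zero a)) (Or.inl (pe_ne_top a))
    rw [tsum_congr this, ENNReal.tsum_mul_left]
    calc (pe a)⁻¹ * ∑' b : ℕ+, ((pe a + pe b) ^ 2)⁻¹
        ≤ (pe a)⁻¹ * (pe a)⁻¹ := mul_le_mul_right (tailE a) _
      _ = (pe a ^ 2)⁻¹ := by
          rw [sq, ENNReal.mul_inv (Or.inl (pe_ne_zero a)) (Or.inl (pe_ne_top a))]
  have : ∑' p : ℕ+ × ℕ+, (pe p.2 * (pe p.1 + pe p.2) ^ (c+2))⁻¹ ≤ ENNReal.ofReal 2 := by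
    calc ∑' p : ℕ+ × ℕ+, (pe p.2 * (pe p.1 + pe p.2) ^ (c+2))⁻¹
        ≤ ∑' p : ℕ+ × ℕ+, (pe p.2 * (pe p.1 + pe p.2) ^ 2)⁻¹ := hle2
      _ = ∑' a : ℕ+, ∑' b : ℕ+, (pe a * (pe a + pe b) ^ 2)⁻¹ := hswap
      _ ≤ ∑' a : ℕ+, (pe a ^ 2)⁻¹ := ENNReal.tsum_le_tsum hinner
      _ ≤ ENNReal.ofReal 2 := zeta2E
  exact (lt_of_le_of_lt this ENNReal.ofReal_lt_top).ne

/-- the A-sum evaluates to ζ(c+3) plus the fiberwise ζ(c+2,1) -/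
lemma A_eval (c : ℕ) :
    ∑' p : ℕ+ × ℕ+, (pe p.2 * (pe p.1 + pe p.2) * pe p.1 ^ (c+1))⁻¹
      = Zz (c+3) + ∑' m : ℕ+, ∑ j ∈ range ((m:ℕ) - 1), (pe (Nat.succPNat j) * pe m ^ (c+2))⁻¹ := by
  rw [ENNReal.tsum_prod (f := fun n k => (pe k * (pe n + pe k) * pe n ^ (c+1))⁻¹)]
  have hn : ∀ n : ℕ+, ∑' k : ℕ+, (pe k * (pe n + pe k) * pe n ^ (c+1))⁻¹
      = (pe n ^ (c+3))⁻¹ + ∑ j ∈ range ((n:ℕ) - 1), (pe (Nat.succPNat j) * pe n ^ (c+2))⁻¹ := by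
    intro n
    have h1 : ∀ k : ℕ+, (pe k * (pe n + pe k) * pe n ^ (c+1))⁻¹
        = (pe n ^ (c+1))⁻¹ * (pe k * (pe k + pe n))⁻¹ := fun k => stepA n k c
    rw [tsum_congr h1, ENNReal.tsum_mul_left, harmE n]
    have h2 : (pe n ^ (c+1))⁻¹ * ((∑ j ∈ range (n:ℕ), (pe (Nat.succPNat j))⁻¹) * (pe n)⁻¹)
        = ∑ j ∈ range (n:ℕ), (pe (Nat.succPNat j) * pe n ^ (c+2))⁻¹ := by
      rw [Finset.sum_mul, Finset.mul_sum]
      apply Finset.sum_congr rfl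
      intro j _
      rw [ENNReal.mul_inv (Or.inl (pe_ne_zero _)) (Or.inl (pe_ne_top _))]
      rw [show pe n ^ (c+2) = pe n ^ (c+1) * pe n by rw [pow_succ]]
      rw [ENNReal.mul_inv (Or.inl (pow_ne_zero _ (pe_ne_zero n)))
        (Or.inl (ENNReal.pow_ne_top (pe_ne_top n)))]
      ring
    rw [h2]
    have h3 : (n:ℕ) = ((n:ℕ) - 1) + 1 := by
      have := n.pos
      omega
    rw [h3, Finset.sum_range_succ]
    rw [show Nat.succPNat ((n:ℕ) - 1) = n from PNat.succPNat_natPred n]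
    rw [show pe n * pe n ^ (c+2) = pe n ^ (c+3) by rw [← pow_succ']]
    rw [add_comm]
    simp
  rw [tsum_congr hn, ENNReal.tsum_add]
  rfl

/-- the main identity, in `ℝ≥0∞` -/
lemma main (c : ℕ) : ∑ a ∈ Icc 2 (c+2), Dz a (c+3-a) = Zz (c+3) := by
  have hgrid : ∀ a ∈ Icc 2 (c+2), Dz a (c+3-a)
      = ∑' p : ℕ+ × ℕ+, ((pe p.1 + pe p.2) ^ a * pe p.1 ^ (c+3-a))⁻¹ := by
    intro a _
    rw [Dz, tsum_grid (fun m x => (pe m ^ a * pe x ^ (c+3-a))⁻¹)]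
    exact tsum_congr fun p => by rw [pe_add]
  rw [Finset.sum_congr rfl hgrid]
  rw [← Summable.tsum_finsetSum (fun a _ => ENNReal.summable)]
  have hpt : ∀ p : ℕ+ × ℕ+,
      (∑ a ∈ Icc 2 (c+2), ((pe p.1 + pe p.2) ^ a * pe p.1 ^ (c+3-a))⁻¹)
        + (pe p.2 * (pe p.1 + pe p.2) ^ (c+2))⁻¹
      = (pe p.2 * (pe p.1 + pe p.2) * pe p.1 ^ (c+1))⁻¹ := by
    intro p
    have hIcc : ∑ a ∈ Icc 2 (c+2), ((pe p.1 + pe p.2) ^ a * pe p.1 ^ (c+3-a))⁻¹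
        = ∑ i ∈ range (c+1), ((pe p.1 + pe p.2) ^ (i+2) * pe p.1 ^ (c+1-i))⁻¹ := by
      rw [← Finset.Ico_add_one_right_eq_Icc, Finset.sum_Ico_eq_sum_range]
      rw [show c + 2 + 1 - 2 = c + 1 from by omega]
      apply Finset.sum_congr rfl
      intro i _
      rw [show 2 + i = i + 2 from by omega, show c + 3 - (i + 2) = c + 1 - i from by omega]
    rw [hIcc]
    have htel := tele (fun i => (pe p.2 * (pe p.1 + pe p.2) ^ (i+1) * pe p.1 ^ (c+1-i))⁻¹)
        (fun i => ((pe p.1 + pe p.2) ^ (i+2) * pe p.1 ^ (c+1-i))⁻¹) (c+1)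
        (fun i hi => by
          show ((pe p.1 + pe p.2) ^ (i+2) * pe p.1 ^ (c+1-i))⁻¹
              + (pe p.2 * (pe p.1 + pe p.2) ^ (i+1+1) * pe p.1 ^ (c+1-(i+1)))⁻¹
            = (pe p.2 * (pe p.1 + pe p.2) ^ (i+1) * pe p.1 ^ (c+1-i))⁻¹
          rw [show c+1-i = (c-i)+1 from by omega, show c+1-(i+1) = c-i from by omega]
          exact step1 p.1 p.2 i (c-i))
    simpa using htel
  have hsum : (∑' p : ℕ+ × ℕ+, ∑ a ∈ Icc 2 (c+2), ((pe p.1 + pe p.2) ^ a * pe p.1 ^ (c+3-a))⁻¹)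
        + (∑' p : ℕ+ × ℕ+, (pe p.2 * (pe p.1 + pe p.2) ^ (c+2))⁻¹)
      = ∑' p : ℕ+ × ℕ+, (pe p.2 * (pe p.1 + pe p.2) * pe p.1 ^ (c+1))⁻¹ := by
    rw [← ENNReal.tsum_add]
    exact tsum_congr hpt
  rw [A_eval c, ← B_fiber c] at hsum
  have hB := B_fin c
  apply (ENNReal.add_right_inj hB).mp
  rw [add_comm] at hsum
  rw [hsum, add_comm]

end EulerAux

theorem stmt0 (l : ℕ) (hl : 3 ≤ l) :
    ∑ l₁ ∈ Finset.Icc 2 (l - 1), dzeta l₁ (l - l₁) = zetav l := by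
  obtain ⟨c, rfl⟩ : ∃ c, l = c + 3 := ⟨l - 3, by omega⟩
  have h1 : c + 3 - 1 = c + 2 := by omega
  rw [h1]
  have hfin : ∀ a ∈ Finset.Icc 2 (c+2), EulerAux.Dz a (c+3-a) ≠ ⊤ := by
    intro a ha
    have hle : EulerAux.Dz a (c+3-a) ≤ EulerAux.Zz (c+3) := by
      rw [← EulerAux.main c]
      exact Finset.single_le_sum (f := fun a => EulerAux.Dz a (c+3-a))
        (fun _ _ => zero_le) ha
    exact (lt_of_le_of_lt hle (lt_of_le_of_lt (EulerAux.Zz_le (c+3) (by omega))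
      ENNReal.ofReal_lt_top)).ne
  calc ∑ a ∈ Finset.Icc 2 (c+2), dzeta a (c+3-a)
      = ∑ a ∈ Finset.Icc 2 (c+2), (EulerAux.Dz a (c+3-a)).toReal :=
        Finset.sum_congr rfl (fun a _ => EulerAux.dzeta_eq a (c+3-a))
    _ = (∑ a ∈ Finset.Icc 2 (c+2), EulerAux.Dz a (c+3-a)).toReal :=
        (ENNReal.toReal_sum hfin).symm
    _ = (EulerAux.Zz (c+3)).toReal := by rw [EulerAux.main c]
    _ = zetav (c+3) := (EulerAux.zetav_eq (c+3)).symm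
end

section
/- For every even integer l ≥ 4, the sum of ζ(l₁, l₂) over all integers l₁ ≥ 2, l₂ ≥ 1 with l₁ + l₂ = l and both l₁ and l₂ even equals (3/4)·ζ(l). -/
open scoped BigOperators
open Finset

/-! ### Auxiliary: Bernoulli convolution identity -/

section Bernoulli
open PowerSeries


lemma exp_deriv : d⁄dX ℚ (PowerSeries.exp ℚ) = PowerSeries.exp ℚ := by
  ext n
  rw [PowerSeries.coeff_derivative, PowerSeries.coeff_exp, PowerSeries.coeff_exp]
  simp only [Algebra.algebraMap_self, RingHom.id_apply]
  rw [Nat.factorial_succ]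
  push_cast
  rw [one_div, one_div, mul_inv]
  field_simp

lemma key_ps : (bernoulliPowerSeries ℚ) * (bernoulliPowerSeries ℚ)
    = bernoulliPowerSeries ℚ - X * bernoulliPowerSeries ℚ
      - X * (d⁄dX ℚ (bernoulliPowerSeries ℚ)) := by
  set f := bernoulliPowerSeries ℚ with hf
  set E := PowerSeries.exp ℚ with hE
  have h1 : f * (E - 1) = X := bernoulliPowerSeries_mul_exp_sub_one ℚ
  have h2 : (d⁄dX ℚ f) * (E - 1) + f * E = 1 := by
    have h := congrArg (d⁄dX ℚ) h1
    rw [Derivation.leibniz, map_sub, exp_deriv, Derivation.map_one_eq_zero,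
      PowerSeries.derivative_X, smul_eq_mul, smul_eq_mul, sub_zero] at h
    linear_combination h
  linear_combination (-(d⁄dX ℚ f) - f) * h1 + f * h2

lemma bernoulli_quadratic (n : ℕ) (hn : 1 ≤ n) :
    ∑ j ∈ range (n + 1), (n.choose j : ℚ) * bernoulli j * bernoulli (n - j)
      = (1 - n) * bernoulli n - n * bernoulli (n - 1) := by
  obtain ⟨m, rfl⟩ := Nat.exists_eq_add_of_le hn
  set n := 1 + m with hn'
  have h := congrArg (PowerSeries.coeff n) key_ps
  have hn1 : n = m + 1 := by omega
  rw [map_sub, map_sub, PowerSeries.coeff_mul] at h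
  rw [hn1, PowerSeries.coeff_succ_X_mul, PowerSeries.coeff_succ_X_mul,
    PowerSeries.coeff_derivative, ← hn1] at h
  simp only [bernoulliPowerSeries, PowerSeries.coeff_mk, Algebra.algebraMap_self,
    RingHom.id_apply] at h
  rw [Finset.Nat.sum_antidiagonal_eq_sum_range_succ_mk] at h
  have hfac : ∀ k : ℕ, ((Nat.factorial k : ℕ) : ℚ) ≠ 0 := fun k => Nat.cast_ne_zero.mpr (Nat.factorial_ne_zero k)
  have key : ∑ j ∈ range (n + 1), (n.choose j : ℚ) * bernoulli j * bernoulli (n - j)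
      = ((Nat.factorial n : ℕ) : ℚ) * ∑ j ∈ range (n + 1), bernoulli j / (Nat.factorial j : ℚ) * (bernoulli (n - j) / (Nat.factorial (n - j) : ℚ)) := by
    rw [Finset.mul_sum]
    refine Finset.sum_congr rfl fun j hj => ?_
    have hjn : j ≤ n := by simp at hj; omega
    rw [Nat.cast_choose ℚ hjn]
    field_simp
  rw [key, h, hn1]
  have hm : ((m + 1 : ℕ) : ℚ) ≠ 0 := by positivity
  rw [Nat.factorial_succ, Nat.add_sub_cancel]
  push_cast
  field_simp
  ring


end Bernoulli

lemma bernoulli_odd_zero {n : ℕ} (h : Odd n) (hn : 1 < n) : bernoulli n = 0 := by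
  rw [bernoulli_eq_bernoulli'_of_ne_one (by omega), bernoulli'_eq_zero_of_odd h hn]

lemma bernoulli_even_conv (k : ℕ) (hk : 2 ≤ k) :
    ∑ j ∈ Icc 1 (k - 1), ((2 * k).choose (2 * j) : ℚ) * bernoulli (2 * j) * bernoulli (2 * k - 2 * j)
      = -(2 * k + 1) * bernoulli (2 * k) := by
  set c : ℕ → ℚ := fun j => ((2 * k).choose j : ℚ) * bernoulli j * bernoulli (2 * k - j) with hc
  have hquad := bernoulli_quadratic (2 * k) (by omega)
  have hodd : ∀ j ∈ range (2 * k + 1), c j ≠ 0 → j % 2 = 0 := by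
    intro j _ hne
    by_contra hj
    apply hne
    rcases eq_or_ne j 1 with rfl | hj1
    · have : bernoulli (2 * k - 1) = 0 :=
        bernoulli_odd_zero ⟨k - 1, by omega⟩ (by omega)
      simp [hc, this]
    · have : bernoulli j = 0 := bernoulli_odd_zero ⟨j / 2, by omega⟩ (by omega)
      simp [hc, this]
  have hfilter : ∑ j ∈ range (2 * k + 1), c j
      = ∑ j ∈ (range (2 * k + 1)).filter (fun j => j % 2 = 0), c j :=
    (Finset.sum_filter_of_ne hodd).symm
  have himage : (range (2 * k + 1)).filter (fun j => j % 2 = 0)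
      = (range (k + 1)).image (fun i => 2 * i) := by
    ext j
    simp only [mem_filter, mem_range, mem_image]
    constructor
    · rintro ⟨h1, h2⟩; exact ⟨j / 2, by omega, by omega⟩
    · rintro ⟨i, hi, rfl⟩; omega
  have hinj : ∀ x ∈ range (k + 1), ∀ y ∈ range (k + 1),
      2 * x = 2 * y → x = y := by intros; omega
  have hsum2 : ∑ j ∈ range (2 * k + 1), c j = ∑ i ∈ range (k + 1), c (2 * i) := by
    rw [hfilter, himage, Finset.sum_image hinj]
  have hsplit : range (k + 1) = insert 0 (insert k (Icc 1 (k - 1))) := by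
    ext j; simp only [mem_range, mem_insert, mem_Icc]; omega
  have h0 : c 0 = bernoulli (2 * k) := by simp [hc]
  have hkk : c (2 * k) = bernoulli (2 * k) := by simp [hc]
  have hins : ∑ i ∈ range (k + 1), c (2 * i)
      = c 0 + c (2 * k) + ∑ i ∈ Icc 1 (k - 1), c (2 * i) := by
    rw [hsplit, Finset.sum_insert (by simp; omega), Finset.sum_insert (by simp; omega)]
    ring
  have hb1 : bernoulli (2 * k - 1) = 0 := bernoulli_odd_zero ⟨k - 1, by omega⟩ (by omega)
  have hgoal : ∑ i ∈ Icc 1 (k - 1), c (2 * i) = -(2 * k + 1) * bernoulli (2 * k) := by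
    have := hsum2.symm.trans hquad
    rw [hins] at this
    rw [h0, hkk, hb1] at this
    push_cast at this ⊢
    linarith
  exact hgoal


/-! ### Auxiliary: zeta values -/

noncomputable def zr (l : ℕ) : ℝ := ∑' n : ℕ, 1 / (n : ℝ) ^ l

section Zeta
open Real

lemma zr_even (m : ℕ) (hm : 1 ≤ m) :
    zr (2 * m) = (-1 : ℝ) ^ (m + 1) * 2 ^ (2 * m) * π ^ (2 * m)
      * (bernoulli (2 * m) : ℝ) / (2 * (Nat.factorial (2 * m) : ℝ)) := by
  have h := (hasSum_zeta_nat (k := m) (by omega)).tsum_eq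
  rw [zr, h]
  have h2 : (2 : ℝ) ^ (2 * m - 1) = 2 ^ (2 * m) / 2 := by
    rw [eq_div_iff (two_ne_zero' ℝ), ← pow_succ]
    congr 1
    omega
  rw [h2]
  ring

lemma euler_zeta_sum (k : ℕ) (hk : 2 ≤ k) :
    ∑ j ∈ Icc 1 (k - 1), zr (2 * j) * zr (2 * (k - j)) = ((k : ℝ) + 1 / 2) * zr (2 * k) := by
  have hfac : ∀ n : ℕ, ((Nat.factorial n : ℕ) : ℝ) ≠ 0 :=
    fun n => Nat.cast_ne_zero.mpr (Nat.factorial_ne_zero n)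
  have key : ∀ j ∈ Icc 1 (k - 1), zr (2 * j) * zr (2 * (k - j))
      = (-1 : ℝ) ^ k * 2 ^ (2 * k) * π ^ (2 * k) / (4 * (Nat.factorial (2 * k) : ℝ))
        * (((2 * k).choose (2 * j) : ℝ) * (bernoulli (2 * j) : ℝ) * (bernoulli (2 * k - 2 * j) : ℝ)) := by
    intro j hj
    simp only [mem_Icc] at hj
    rw [zr_even j (by omega), zr_even (k - j) (by omega)]
    have hchoose : (((2 * k).choose (2 * j) : ℕ) : ℝ)
        = (Nat.factorial (2 * k) : ℝ) / ((Nat.factorial (2 * j) : ℝ) * (Nat.factorial (2 * k - 2 * j) : ℝ)) := by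
      have := Nat.cast_choose ℝ (show 2 * j ≤ 2 * k by omega)
      rw [this]
    have hkj : 2 * (k - j) = 2 * k - 2 * j := by omega
    rw [hkj]
    have hsign : (-1 : ℝ) ^ (j + 1) * (-1 : ℝ) ^ (k - j + 1) = (-1 : ℝ) ^ k := by
      rw [← pow_add]
      have : j + 1 + (k - j + 1) = k + 2 := by omega
      rw [this, pow_add]
      norm_num
    have hpow2 : (2 : ℝ) ^ (2 * j) * 2 ^ (2 * k - 2 * j) = 2 ^ (2 * k) := by
      rw [← pow_add]; congr 1; omega
    have hpowpi : (π : ℝ) ^ (2 * j) * π ^ (2 * k - 2 * j) = π ^ (2 * k) := by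
      rw [← pow_add]; congr 1; omega
    calc ((-1 : ℝ) ^ (j + 1) * 2 ^ (2 * j) * π ^ (2 * j)
          * (bernoulli (2 * j) : ℝ) / (2 * (Nat.factorial (2 * j) : ℝ)))
        * ((-1 : ℝ) ^ (k - j + 1) * 2 ^ (2 * k - 2 * j) * π ^ (2 * k - 2 * j)
          * (bernoulli (2 * k - 2 * j) : ℝ) / (2 * (Nat.factorial (2 * k - 2 * j) : ℝ)))
        = ((-1 : ℝ) ^ (j + 1) * (-1 : ℝ) ^ (k - j + 1)) * (((2 : ℝ) ^ (2 * j) * 2 ^ (2 * k - 2 * j))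
            * (((π : ℝ) ^ (2 * j) * π ^ (2 * k - 2 * j))
              * (((bernoulli (2 * j) : ℝ) * (bernoulli (2 * k - 2 * j) : ℝ))
                / (4 * ((Nat.factorial (2 * j) : ℝ) * (Nat.factorial (2 * k - 2 * j) : ℝ)))))) := by
          ring
      _ = (-1 : ℝ) ^ k * ((2 : ℝ) ^ (2 * k) * ((π : ℝ) ^ (2 * k)
            * (((bernoulli (2 * j) : ℝ) * (bernoulli (2 * k - 2 * j) : ℝ))
              / (4 * ((Nat.factorial (2 * j) : ℝ) * (Nat.factorial (2 * k - 2 * j) : ℝ)))))) := by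
          rw [hsign, hpow2, hpowpi]
      _ = (-1 : ℝ) ^ k * 2 ^ (2 * k) * π ^ (2 * k) / (4 * (Nat.factorial (2 * k) : ℝ))
            * (((2 * k).choose (2 * j) : ℝ) * (bernoulli (2 * j) : ℝ) * (bernoulli (2 * k - 2 * j) : ℝ)) := by
          rw [hchoose]
          field_simp
  rw [Finset.sum_congr rfl key, ← Finset.mul_sum]
  have hq : ((∑ j ∈ Icc 1 (k - 1), ((2 * k).choose (2 * j) : ℚ) * bernoulli (2 * j)
      * bernoulli (2 * k - 2 * j) : ℚ) : ℝ) = ((-(2 * k + 1) * bernoulli (2 * k) : ℚ) : ℝ) := by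
    exact_mod_cast congrArg (fun q : ℚ => (q : ℝ)) (bernoulli_even_conv k hk)
  push_cast at hq
  rw [hq, zr_even k (by omega)]
  have h1 : (-1 : ℝ) ^ (k + 1) = -(-1 : ℝ) ^ k := by rw [pow_succ]; ring
  rw [h1]
  field_simp
  ring


end Zeta

/-! ### Auxiliary: stuffle relation -/

noncomputable def FF (a b : ℕ) : ℕ+ × ℕ+ → ℝ :=
  fun q => (1 / (q.1 : ℝ) ^ a) * (1 / (q.2 : ℝ) ^ b)

lemma summable_pnat (a : ℕ) (ha : 2 ≤ a) : Summable (fun m : ℕ+ => 1 / (m : ℝ) ^ a) := by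
  have h : Summable (fun n : ℕ => 1 / (n : ℝ) ^ a) :=
    Real.summable_one_div_nat_pow.mpr (by omega)
  exact h.comp_injective PNat.coe_injective

lemma zetav_eq_zr (l : ℕ) (hl : 1 ≤ l) : zetav l = zr l := by
  rw [zetav, zr]
  refine Function.Injective.tsum_eq (g := (PNat.val : ℕ+ → ℕ))
    (f := fun n : ℕ => 1 / (n : ℝ) ^ l) PNat.coe_injective ?_
  intro n hn
  rcases Nat.eq_zero_or_pos n with rfl | hpos
  · simp [zero_pow (by omega : l ≠ 0)] at hn
  · exact ⟨⟨n, hpos⟩, rfl⟩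

lemma FF_summable (a b : ℕ) (ha : 2 ≤ a) (hb : 2 ≤ b) : Summable (FF a b) := by
  have h1 : (0 : ℕ+ → ℝ) ≤ fun m : ℕ+ => 1 / (m : ℝ) ^ a := fun m => by positivity
  have h2 : (0 : ℕ+ → ℝ) ≤ fun m : ℕ+ => 1 / (m : ℝ) ^ b := fun m => by positivity
  exact Summable.mul_of_nonneg (f := fun m : ℕ+ => 1 / (m : ℝ) ^ a)
    (g := fun m : ℕ+ => 1 / (m : ℝ) ^ b) (summable_pnat a ha) (summable_pnat b hb) h1 h2

lemma FF_prod (a b : ℕ) (ha : 2 ≤ a) (hb : 2 ≤ b) :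
    zetav a * zetav b = ∑' q, FF a b q := by
  rw [zetav, zetav, Summable.tsum_prod (FF_summable a b ha hb), ← tsum_mul_right]
  exact tsum_congr fun m => (tsum_mul_left).symm

lemma stuffle (a b : ℕ) (ha : 2 ≤ a) (hb : 2 ≤ b) :
    zetav a * zetav b = dzeta a b + dzeta b a + zetav (a + b) := by
  have hFs := FF_summable a b ha hb
  set s : Set (ℕ+ × ℕ+) := {q | q.2 < q.1} with hs
  set t : Set (ℕ+ × ℕ+) := {q | q.1 < q.2} with ht
  set u : Set (ℕ+ × ℕ+) := {q | q.1 = q.2} with hu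
  have hcompl : sᶜ = t ∪ u := by
    ext q
    simp only [Set.mem_compl_iff, Set.mem_setOf_eq, Set.mem_union, hs, ht, hu]
    constructor
    · intro h
      rcases lt_or_eq_of_le (not_lt.mp h) with h' | h'
      · exact Or.inl h'
      · exact Or.inr h'
    · rintro (h | h) <;> [exact not_lt.mpr h.le; exact not_lt.mpr h.le]
  have hdisj : Disjoint t u := by
    rw [Set.disjoint_left]
    rintro q hq1 hq2
    exact absurd hq2 (ne_of_lt hq1)
  have hsplit : (∑' x : s, FF a b x) + ((∑' x : t, FF a b x) + (∑' x : u, FF a b x))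
      = ∑' q, FF a b q := by
    rw [← Summable.tsum_union_disjoint hdisj (hFs.subtype t) (hFs.subtype u), ← hcompl]
    exact Summable.tsum_add_tsum_compl (hFs.subtype s) (hFs.subtype _)
  have h1 : (∑' x : s, FF a b x) = dzeta a b := by
    rw [dzeta]
    refine tsum_congr fun p => ?_
    rw [FF, div_mul_div_comm, one_mul]
  have h2 : (∑' x : t, FF a b x) = dzeta b a := by
    rw [dzeta]
    rw [← Equiv.tsum_eq (⟨fun p => ⟨(p.1.2, p.1.1), p.2⟩, fun p => ⟨(p.1.2, p.1.1), p.2⟩,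
        fun p => by ext <;> rfl, fun p => by ext <;> rfl⟩ :
        {q : ℕ+ × ℕ+ // q.2 < q.1} ≃ t) (fun x : t => FF a b x)]
    refine tsum_congr fun p => ?_
    show (1 / ((p : ℕ+ × ℕ+).2 : ℝ) ^ a) * (1 / ((p : ℕ+ × ℕ+).1 : ℝ) ^ b) = _
    rw [div_mul_div_comm, one_mul, mul_comm]
  have h3 : (∑' x : u, FF a b x) = zetav (a + b) := by
    rw [zetav]
    rw [← Equiv.tsum_eq ((⟨fun m => ⟨(m, m), rfl⟩, fun x => x.1.1,
        fun m => rfl, fun x => by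
          ext
          · rfl
          · exact x.2⟩ : ℕ+ ≃ u)) (fun x : u => FF a b x)]
    refine tsum_congr fun m => ?_
    show (1 / (m : ℝ) ^ a) * (1 / (m : ℝ) ^ b) = _
    rw [div_mul_div_comm, one_mul, ← pow_add]
  rw [FF_prod a b ha hb, ← hsplit, h1, h2, h3]
  ring


theorem stmt1 (l : ℕ) (hl : 4 ≤ l) (hev : l % 2 = 0) :
    ∑ l₁ ∈ (Finset.Icc 2 (l - 1)).filter (fun l₁ => l₁ % 2 = 0 ∧ (l - l₁) % 2 = 0),
      dzeta l₁ (l - l₁) = (3 / 4) * zetav l := by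
  set k := l / 2 with hk
  have hk2 : 2 ≤ k := by omega
  have hlk : l = 2 * k := by omega
  set S := ∑ j ∈ Icc 1 (k - 1), dzeta (2 * j) (2 * (k - j)) with hS
  -- Step A : the filtered sum equals S
  have hA : ∑ l₁ ∈ (Finset.Icc 2 (l - 1)).filter (fun l₁ => l₁ % 2 = 0 ∧ (l - l₁) % 2 = 0),
      dzeta l₁ (l - l₁) = S := by
    rw [hS]
    refine Finset.sum_nbij' (fun l₁ => l₁ / 2) (fun j => 2 * j) ?_ ?_ ?_ ?_ ?_
    · intro a ha
      simp only [mem_filter, mem_Icc] at ha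
      simp only [mem_Icc]
      omega
    · intro j hj
      simp only [mem_Icc] at hj
      simp only [mem_filter, mem_Icc]
      omega
    · intro a ha
      simp only [mem_filter, mem_Icc] at ha
      show 2 * (a / 2) = a
      omega
    · intro j hj
      simp only [mem_Icc] at hj
      show 2 * j / 2 = j
      omega
    · intro a ha
      simp only [mem_filter, mem_Icc] at ha
      rw [show 2 * (a / 2) = a from by omega, show 2 * (k - a / 2) = l - a from by omega]
  -- Step B : reflection
  have hrefl : ∑ j ∈ Icc 1 (k - 1), dzeta (2 * (k - j)) (2 * j) = S := by
    rw [hS]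
    refine Finset.sum_nbij' (fun j => k - j) (fun j => k - j) ?_ ?_ ?_ ?_ ?_
    · intro a ha
      simp only [mem_Icc] at ha ⊢
      omega
    · intro a ha
      simp only [mem_Icc] at ha ⊢
      omega
    · intro a ha
      simp only [mem_Icc] at ha
      show k - (k - a) = a
      omega
    · intro a ha
      simp only [mem_Icc] at ha
      show k - (k - a) = a
      omega
    · intro a ha
      simp only [mem_Icc] at ha
      rw [show k - (k - a) = a from by omega]
  -- Step C : summed stuffle
  have hsum : ∑ j ∈ Icc 1 (k - 1), zetav (2 * j) * zetav (2 * (k - j))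
      = S + S + ((k : ℝ) - 1) * zetav l := by
    have : ∀ j ∈ Icc 1 (k - 1), zetav (2 * j) * zetav (2 * (k - j))
        = dzeta (2 * j) (2 * (k - j)) + dzeta (2 * (k - j)) (2 * j) + zetav l := by
      intro j hj
      simp only [mem_Icc] at hj
      rw [stuffle (2 * j) (2 * (k - j)) (by omega) (by omega),
        show 2 * j + 2 * (k - j) = l from by omega]
    rw [Finset.sum_congr rfl this, Finset.sum_add_distrib, Finset.sum_add_distrib,
      Finset.sum_const, hrefl, ← hS, Nat.card_Icc,
      show k - 1 + 1 - 1 = k - 1 from by omega, nsmul_eq_mul,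
      Nat.cast_sub (show 1 ≤ k from by omega), Nat.cast_one]
  -- Step D : Euler's evaluation
  have hD : ∑ j ∈ Icc 1 (k - 1), zetav (2 * j) * zetav (2 * (k - j))
      = ((k : ℝ) + 1 / 2) * zetav l := by
    have : ∀ j ∈ Icc 1 (k - 1), zetav (2 * j) * zetav (2 * (k - j))
        = zr (2 * j) * zr (2 * (k - j)) := by
      intro j hj
      simp only [mem_Icc] at hj
      rw [zetav_eq_zr (2 * j) (by omega), zetav_eq_zr (2 * (k - j)) (by omega)]
    rw [Finset.sum_congr rfl this, euler_zeta_sum k hk2, ← hlk, zetav_eq_zr l (by omega)]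
  rw [hA]
  have := hsum.symm.trans hD
  linarith
end

section
/- Let l ≥ 8 be an integer with l ≡ 2 (mod 6). Then for each m ∈ {0, 2, 4}, ∑_{j=0, j ≡ m (mod 6)}^{l} C(l,j) B_j B_{l-j} = −((l−1)/3)·B_l, where B_m are the Bernoulli numbers. -/
open scoped BigOperators
open Finset

section Aux
open PowerSeries
noncomputable def bb (n : ℕ) : ℂ := algebraMap ℚ ℂ (bernoulli n / (n.factorial : ℚ))

noncomputable def Fc (c : ℂ) : ℂ⟦X⟧ := rescale c (bernoulliPowerSeries ℂ)

lemma coeff_Fc (c : ℂ) (n : ℕ) : coeff n (Fc c) = c ^ n * bb n := by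
  simp [Fc, coeff_rescale, bernoulliPowerSeries, bb]

lemma Fc_mul (c : ℂ) : Fc c * (rescale c (exp ℂ) - 1) = C c * X := by
  have h := congrArg (rescale c) (bernoulliPowerSeries_mul_exp_sub_one ℂ)
  rw [map_mul, map_sub, map_one, rescale_X] at h
  exact h

lemma E_ne (c : ℂ) (hc : c ≠ 0) : rescale c (exp ℂ) - 1 ≠ 0 := by
  intro h
  have h1 : rescale c (exp ℂ) = 1 := by linear_combination h
  have := congrArg (coeff 1) h1
  simp [coeff_rescale, coeff_exp] at this
  exact hc this

lemma key (c d : ℂ) (hc : c ≠ 0) (hd : d ≠ 0) (hcd : c + d ≠ 0) :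
    (C c + C d) * X * (Fc c * Fc d)
      = Fc (c + d) * (C d * X * Fc c + C c * X * Fc d + C c * C d * X ^ 2) := by
  have h1 := Fc_mul c
  have h2 := Fc_mul d
  have h3 := Fc_mul (c + d)
  rw [map_add] at h3
  have h4 := exp_mul_exp_eq_exp_add c d
  apply mul_right_cancel₀ (mul_ne_zero (E_ne c hc) (E_ne d hd))
  set e1 := rescale c (exp ℂ)
  set e2 := rescale d (exp ℂ)
  set e3 := rescale (c + d) (exp ℂ)
  linear_combination ((C c + C d) * X * Fc d * (e2 - 1) + (C c + C d) * X * (C d * X)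
      - C d * X * Fc (c+d) * (e2 - 1) - (C c + C d) * C d * X ^ 2) * h1
    + ((C c + C d) * X * (C c * X) - C c * X * Fc (c+d) * (e1 - 1)) * h2
    - (C c * C d * X ^ 2) * h3 - (C c * C d * X ^ 2 * Fc (c+d)) * h4

lemma coeffProd (a b' : ℂ) (n : ℕ) : coeff n (Fc a * Fc b')
    = ∑ i ∈ range (n + 1), a ^ i * bb i * (b' ^ (n - i) * bb (n - i)) := by
  rw [coeff_mul, Finset.Nat.sum_antidiagonal_eq_sum_range_succ_mk]
  simp [coeff_Fc]

lemma star (k : ℕ) (c d : ℂ) (hc : c ≠ 0) (hd : d ≠ 0) (hcd : c + d ≠ 0) :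
    (c + d) * ∑ i ∈ range (k + 2), c ^ i * bb i * (d ^ (k + 1 - i) * bb (k + 1 - i))
      = (∑ i ∈ range (k + 2),
          (c + d) ^ i * bb i * ((d * c ^ (k + 1 - i) + c * d ^ (k + 1 - i)) * bb (k + 1 - i)))
        + c * d * (c + d) ^ k * bb k := by
  have key2 : C (c + d) * (X * (Fc c * Fc d))
      = C d * (X * (Fc (c + d) * Fc c)) + C c * (X * (Fc (c + d) * Fc d))
        + C c * (C d * (X ^ 2 * Fc (c + d))) := by
    rw [map_add]; linear_combination key c d hc hd hcd
  have h := congrArg (coeff (k + 2)) key2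
  have e2 : (k + 2) = (k + 1) + 1 := rfl
  have e3 : (k + 2) = k + 2 := rfl
  rw [coeff_C_mul, map_add, map_add, coeff_C_mul, coeff_C_mul, coeff_C_mul, coeff_C_mul,
    coeff_X_pow_mul, e2, coeff_succ_X_mul, coeff_succ_X_mul, coeff_succ_X_mul,
    coeffProd, coeffProd, coeffProd, coeff_Fc] at h
  rw [h, Finset.mul_sum, Finset.mul_sum, ← Finset.sum_add_distrib]
  refine congrArg₂ _ (Finset.sum_congr rfl fun i _ => by ring) (by ring)

lemma derivative_exp' : d⁄dX ℂ (exp ℂ) = exp ℂ := by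
  ext n
  rw [coeff_derivative, coeff_exp, coeff_exp, eq_ratCast, eq_ratCast]
  push_cast
  rw [Nat.factorial_succ]
  push_cast
  have h0 : ((n.factorial : ℕ) : ℂ) ≠ 0 := by exact_mod_cast Nat.factorial_ne_zero n
  have h1 : ((n : ℂ) + 1) ≠ 0 := Nat.cast_add_one_ne_zero n
  field_simp

lemma euler_ps : bernoulliPowerSeries ℂ * bernoulliPowerSeries ℂ
    = bernoulliPowerSeries ℂ - X * bernoulliPowerSeries ℂ - X * d⁄dX ℂ (bernoulliPowerSeries ℂ) := by
  set F := bernoulliPowerSeries ℂ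
  have hFE : F * (exp ℂ - 1) = X := bernoulliPowerSeries_mul_exp_sub_one ℂ
  have hdX : d⁄dX ℂ (F * (exp ℂ - 1)) = 1 := by rw [hFE, derivative_X]
  rw [Derivation.leibniz] at hdX
  have hdE : d⁄dX ℂ (exp ℂ - 1) = exp ℂ := by
    rw [map_sub, derivative_exp', Derivation.map_one_eq_zero, sub_zero]
  rw [hdE, smul_eq_mul, smul_eq_mul] at hdX
  have hE : (exp ℂ - 1) ≠ 0 := by
    intro h
    have h1 : exp ℂ = 1 := by linear_combination h
    have := congrArg (coeff 1) h1
    simp [coeff_exp] at this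
  apply mul_right_cancel₀ hE
  -- hdX : F * exp ℂ + (exp ℂ - 1) * d⁄dX ℂ F = 1
  linear_combination (F - 1) * hFE + X * hdX

lemma Fc_one : Fc 1 = bernoulliPowerSeries ℂ := by
  rw [Fc, rescale_one]; rfl

lemma euler (k : ℕ) : ∑ i ∈ range (k + 2), bb i * bb (k + 1 - i)
    = - ((k : ℂ) + 1) * bb (k + 1) + bb (k + 1) - bb k := by
  have h := congrArg (coeff (k + 1)) euler_ps
  rw [← Fc_one, coeffProd, map_sub, map_sub, coeff_succ_X_mul, coeff_succ_X_mul,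
    coeff_derivative, Fc_one] at h
  have hb : ∀ n, coeff n (bernoulliPowerSeries ℂ) = bb n := by
    intro n; rw [← Fc_one, coeff_Fc, one_pow, one_mul]
  simp only [hb, one_pow, one_mul] at h
  rw [show k + 2 = k + 1 + 1 from rfl, h]; push_cast; ring

noncomputable def w : ℂ := (-1 + Real.sqrt 3 * Complex.I)/2

lemma hw : w^2 + w + 1 = 0 := by
  have h3 : ((Real.sqrt 3 : ℝ) : ℂ)^2 = 3 := by
    rw [← Complex.ofReal_pow, Real.sq_sqrt (by norm_num : (3:ℝ) ≥ 0)]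
    norm_num
  have hI : Complex.I^2 = -1 := Complex.I_sq
  rw [w]
  linear_combination (Complex.I^2/4) * h3 + (3/4) * hI

lemma hw0 : w ≠ 0 := by
  intro h
  have := hw
  rw [h] at this
  norm_num at this

lemma hw3 : w^3 = 1 := by linear_combination (w - 1) * hw

lemma hwn (n : ℕ) : w^n = w^(n % 3) := by
  conv_lhs => rw [← Nat.div_add_mod n 3]
  rw [pow_add, pow_mul, hw3, one_pow, one_mul]

lemma wPowEq (a b : ℕ) (h : a % 3 = b % 3) : w^a = w^b := by rw [hwn a, hwn b, h]

lemma hw1 : w + 1 ≠ 0 := by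
  intro h
  have h2 : w^2 = 0 := by linear_combination hw - h
  exact hw0 (pow_eq_zero_iff (by norm_num) |>.mp h2)

lemma hw2 : w^2 + 1 ≠ 0 := by
  intro h
  have h2 : w = 0 := by linear_combination hw - h
  exact hw0 h2

lemma bb_odd (n : ℕ) (hodd : n % 2 = 1) (hne : n ≠ 1) : bb n = 0 := by
  have h : bernoulli n = 0 := by
    rw [bernoulli_eq_bernoulli'_of_ne_one hne]
    exact bernoulli'_eq_zero_of_odd (Nat.odd_iff.mpr hodd) (by omega)
  simp [bb, h]

lemma bbz (k i : ℕ) (h6 : (k+1) % 6 = 2) (h8 : 8 ≤ k+1) (h2 : i % 2 = 1) :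
    bb i * bb (k+1-i) = 0 := by
  rcases eq_or_ne i 1 with rfl | hne
  · rw [bb_odd (k+1-1) (by omega) (by omega), mul_zero]
  · rw [bb_odd i h2 hne, zero_mul]

lemma C1 (k : ℕ) (h6 : (k+1) % 6 = 2) (h8 : 8 ≤ k+1) :
    ∑ i ∈ range (k+2), (w+1)^i * bb i * ((1*w^(k+1-i) + w*1^(k+1-i)) * bb (k+1-i))
      = w^2 * (∑ i ∈ range (k+2), w^i * bb i * (1^(k+1-i) * bb (k+1-i)))
        + w * (∑ i ∈ range (k+2), (w^2)^i * bb i * (1^(k+1-i) * bb (k+1-i))) := by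
  rw [Finset.mul_sum, Finset.mul_sum, ← Finset.sum_add_distrib]
  refine Finset.sum_congr rfl fun i hi => ?_
  have hil : i ≤ k + 1 := by
    have := Finset.mem_range.mp hi; omega
  rcases Nat.even_or_odd i with he | ho
  · obtain ⟨s, rfl⟩ := he
    have h2 : (w+1)^(s+s) = w^s := by
      rw [show s + s = 2*s by ring, pow_mul, show (w+1)^2 = w by linear_combination hw]
    have e1 : w^s * w^(k+1-(s+s)) = w^2 * w^(s+s) := by
      rw [← pow_add, ← pow_add]; exact wPowEq _ _ (by omega)
    have e2 : w^s * w^1 = w^1 * (w^2)^(s+s) := by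
      rw [← pow_mul, ← pow_add, ← pow_add]; exact wPowEq _ _ (by omega)
    linear_combination (bb (s+s) * bb (k+1-(s+s)) * (w^(k+1-(s+s)) + w)) * h2
      + (bb (s+s) * bb (k+1-(s+s))) * e1 + (bb (s+s) * bb (k+1-(s+s))) * e2
  · have hz : bb i * bb (k+1-i) = 0 := bbz k i h6 h8 (Nat.odd_iff.mp ho)
    linear_combination ((w+1)^i * (1*w^(k+1-i) + w*1^(k+1-i))
      - w^2 * w^i * 1^(k+1-i) - w * (w^2)^i * 1^(k+1-i)) * hz

lemma C2 (k : ℕ) (h6 : (k+1) % 6 = 2) (h8 : 8 ≤ k+1) :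
    ∑ i ∈ range (k+2), (w^2+1)^i * bb i * ((1*(w^2)^(k+1-i) + w^2*1^(k+1-i)) * bb (k+1-i))
      = w * (∑ i ∈ range (k+2), (w^2)^i * bb i * (1^(k+1-i) * bb (k+1-i)))
        + w^2 * (∑ i ∈ range (k+2), w^i * bb i * (1^(k+1-i) * bb (k+1-i))) := by
  rw [Finset.mul_sum, Finset.mul_sum, ← Finset.sum_add_distrib]
  refine Finset.sum_congr rfl fun i hi => ?_
  have hil : i ≤ k + 1 := by
    have := Finset.mem_range.mp hi; omega
  rcases Nat.even_or_odd i with he | ho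
  · obtain ⟨s, rfl⟩ := he
    have h2 : (w^2+1)^(s+s) = w^(2*s) := by
      rw [show s + s = 2*s by ring, pow_mul, pow_mul,
        show (w^2+1)^2 = (w^2)^1 by linear_combination (w^2 - w + 1) * hw]
      rw [pow_one]
    have e1 : w^(2*s) * (w^2)^(k+1-(s+s)) = w^1 * (w^2)^(s+s) := by
      rw [← pow_mul, ← pow_mul, ← pow_add, ← pow_add]; exact wPowEq _ _ (by omega)
    have e2 : w^(2*s) * w^2 = w^2 * w^(s+s) := by
      rw [← pow_add, ← pow_add]; exact wPowEq _ _ (by omega)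
    linear_combination (bb (s+s) * bb (k+1-(s+s)) * ((w^2)^(k+1-(s+s)) + w^2)) * h2
      + (bb (s+s) * bb (k+1-(s+s))) * e1 + (bb (s+s) * bb (k+1-(s+s))) * e2
  · have hz : bb i * bb (k+1-i) = 0 := bbz k i h6 h8 (Nat.odd_iff.mp ho)
    linear_combination ((w^2+1)^i * (1*(w^2)^(k+1-i) + w^2*1^(k+1-i))
      - w * (w^2)^i * 1^(k+1-i) - w^2 * w^i * 1^(k+1-i)) * hz

lemma claim3 (k m : ℕ) (h6 : (k+1) % 6 = 2) (h8 : 8 ≤ k+1) (hm : m = 0 ∨ m = 2 ∨ m = 4) :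
    (∑ i ∈ range (k+2), bb i * bb (k+1-i))
      + w^(2*m) * (∑ i ∈ range (k+2), w^i * bb i * (1^(k+1-i) * bb (k+1-i)))
      + w^m * (∑ i ∈ range (k+2), (w^2)^i * bb i * (1^(k+1-i) * bb (k+1-i)))
      = 3 * ∑ i ∈ (range (k+2)).filter (fun j => j % 6 = m), bb i * bb (k+1-i) := by
  rw [Finset.sum_filter, Finset.mul_sum, Finset.mul_sum, Finset.mul_sum,
    ← Finset.sum_add_distrib, ← Finset.sum_add_distrib]
  refine Finset.sum_congr rfl fun i hi => ?_
  by_cases him : i % 6 = m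
  · rw [if_pos him]
    rcases Nat.even_or_odd i with he | ho
    · have p1 : w^(2*m) * w^i = 1 := by
        rw [← pow_add, wPowEq (2*m+i) 0 (by omega), pow_zero]
      have p2 : w^m * (w^2)^i = 1 := by
        rw [← pow_mul, ← pow_add, wPowEq (m+2*i) 0 (by omega), pow_zero]
      have hpar := Nat.even_iff.mp he
      linear_combination (bb i * bb (k+1-i) * 1^(k+1-i)) * p1 + (bb i * bb (k+1-i) * 1^(k+1-i)) * p2
    · have hz : bb i * bb (k+1-i) = 0 := bbz k i h6 h8 (Nat.odd_iff.mp ho)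
      linear_combination (1 + w^(2*m) * w^i * 1^(k+1-i) + w^m * (w^2)^i * 1^(k+1-i) - 3) * hz
  · rw [if_neg him]
    rcases Nat.even_or_odd i with he | ho
    · have hpar := Nat.even_iff.mp he
      have hc : (2*m+i) % 3 = 1 ∨ (2*m+i) % 3 = 2 := by omega
      rcases hc with hc | hc
      · have p1 : w^(2*m) * w^i = w := by
          rw [← pow_add, wPowEq (2*m+i) 1 (by omega), pow_one]
        have p2 : w^m * (w^2)^i = w^2 := by
          rw [← pow_mul, ← pow_add]; exact wPowEq (m+2*i) 2 (by omega)
        linear_combination (bb i * bb (k+1-i) * 1^(k+1-i)) * p1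
          + (bb i * bb (k+1-i) * 1^(k+1-i)) * p2 + (bb i * bb (k+1-i)) * hw
      · have p1 : w^(2*m) * w^i = w^2 := by
          rw [← pow_add]; exact wPowEq (2*m+i) 2 (by omega)
        have p2 : w^m * (w^2)^i = w := by
          rw [← pow_mul, ← pow_add, wPowEq (m+2*i) 1 (by omega), pow_one]
        linear_combination (bb i * bb (k+1-i) * 1^(k+1-i)) * p1
          + (bb i * bb (k+1-i) * 1^(k+1-i)) * p2 + (bb i * bb (k+1-i)) * hw
    · have hz : bb i * bb (k+1-i) = 0 := bbz k i h6 h8 (Nat.odd_iff.mp ho)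
      linear_combination (1 + w^(2*m) * w^i * 1^(k+1-i) + w^m * (w^2)^i * 1^(k+1-i)) * hz

lemma bb_eq (n : ℕ) : bb n = ((bernoulli n : ℚ) : ℂ) / (n.factorial : ℂ) := by
  rw [bb, eq_ratCast]; push_cast; ring


end Aux

open PowerSeries in
theorem stmt10 (l : ℕ) (hl : 8 ≤ l) (h6 : l % 6 = 2) (m : ℕ)
    (hm : m = 0 ∨ m = 2 ∨ m = 4) :
    ∑ j ∈ (Finset.range (l + 1)).filter (fun j => j % 6 = m),
      (l.choose j : ℚ) * bernoulli j * bernoulli (l - j)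
      = -(((l : ℚ) - 1) / 3) * bernoulli l := by
  obtain ⟨k, rfl⟩ : ∃ k, l = k + 1 := ⟨l - 1, by omega⟩
  simp only [show k + 1 + 1 = k + 2 from rfl]
  set r1 := ∑ i ∈ range (k+2), w^i * bb i * (1^(k+1-i) * bb (k+1-i)) with hr1def
  set r2 := ∑ i ∈ range (k+2), (w^2)^i * bb i * (1^(k+1-i) * bb (k+1-i)) with hr2def
  have bbk0 : bb k = 0 := bb_odd k (by omega) (by omega)
  have hA := star k w 1 hw0 one_ne_zero hw1
  have hB := star k (w^2) 1 (pow_ne_zero 2 hw0) one_ne_zero hw2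
  rw [C1 k h6 hl] at hA
  rw [C2 k h6 hl] at hB
  have e1 : w * r2 + 2 * w^2 * r1 = 0 := by
    linear_combination (-1 : ℂ) * hA + r1 * hw - (w * 1 * (w+1)^k) * bbk0
  have e2 : w^2 * r1 + 2 * w * r2 = 0 := by
    linear_combination (-1 : ℂ) * hB + r2 * hw - (w^2 * 1 * (w^2+1)^k) * bbk0
  have hr2 : r2 = 0 := by
    have h33 : (3:ℂ) * (w * r2) = 0 := by linear_combination 2 * e2 - e1
    have h34 := (mul_eq_zero.mp h33).resolve_left (by norm_num)
    exact (mul_eq_zero.mp h34).resolve_left hw0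
  have hr1 : r1 = 0 := by
    have h35 : w^2 * r1 = 0 := by linear_combination e2 - 2 * w * hr2
    exact (mul_eq_zero.mp h35).resolve_left (pow_ne_zero 2 hw0)
  have c3 := claim3 k m h6 hl hm
  have h3S : 3 * ∑ i ∈ (range (k+2)).filter (fun j => j % 6 = m), bb i * bb (k+1-i)
      = -((k:ℂ)+1) * bb (k+1) + bb (k+1) := by
    linear_combination (-1:ℂ) * c3 + euler k + w^(2*m) * hr1 + w^m * hr2 - bbk0
  apply Rat.cast_injective (α := ℂ)
  push_cast
  have hterm : ∀ j ∈ (range (k+2)).filter (fun j => j % 6 = m),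
      ((k+1).choose j : ℂ) * ((bernoulli j : ℚ) : ℂ) * ((bernoulli (k+1-j) : ℚ) : ℂ)
        = ((k+1).factorial : ℂ) * (bb j * bb (k+1-j)) := by
    intro j hj
    have hjle : j ≤ k + 1 := by
      have := Finset.mem_range.mp (Finset.mem_filter.mp hj).1; omega
    have h1 : (j.factorial : ℂ) ≠ 0 := Nat.cast_ne_zero.mpr (Nat.factorial_ne_zero j)
    have h2 : ((k+1-j).factorial : ℂ) ≠ 0 := Nat.cast_ne_zero.mpr (Nat.factorial_ne_zero _)
    have hcf : (((k+1).choose j : ℕ) : ℂ) * (j.factorial : ℂ) * ((k+1-j).factorial : ℂ)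
        = ((k+1).factorial : ℂ) := by
      exact_mod_cast congrArg (Nat.cast : ℕ → ℂ)
        (Nat.choose_mul_factorial_mul_factorial hjle)
    rw [bb_eq, bb_eq]
    field_simp
    linear_combination (((bernoulli j : ℚ) : ℂ) * ((bernoulli (k+1-j) : ℚ) : ℂ)) * hcf
  rw [Finset.sum_congr rfl hterm, ← Finset.mul_sum]
  have hbl : ((bernoulli (k+1) : ℚ) : ℂ) = ((k+1).factorial : ℂ) * bb (k+1) := by
    rw [bb_eq, mul_div_cancel₀]
    exact Nat.cast_ne_zero.mpr (Nat.factorial_ne_zero _)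
  rw [hbl]
  linear_combination (((k+1).factorial : ℂ)/3) * h3S
end

section
/- For every integer l ≥ 3, ∑_{l₁ ≥ 2, l₂ ≥ 1, l₁+l₂ = l} 2^{l₁−1} ζ(l₁, l₂) = ((l+1)/2)·ζ(l). -/
open scoped BigOperators
open Finset

namespace OZ

open Filter

/-! ### Basic majorant -/

noncomputable def g (n : ℕ) : ℝ := 1 / ((n : ℝ) * Real.sqrt n)

lemma g_nonneg (n : ℕ) : 0 ≤ g n := by
  unfold g; positivity

lemma summable_g : Summable g := by
  have h : Summable (fun n : ℕ => ((n : ℝ) ^ ((3:ℝ)/2))⁻¹) :=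
    Real.summable_nat_rpow_inv.2 (by norm_num)
  refine h.congr fun n => ?_
  rcases Nat.eq_zero_or_pos n with h0 | h0
  · subst h0; simp [g]
  have hn : (0:ℝ) < n := by exact_mod_cast h0
  have : (n : ℝ) ^ ((3:ℝ)/2) = (n : ℝ) * Real.sqrt n := by
    rw [show (3:ℝ)/2 = 1 + 1/2 by norm_num, Real.rpow_add hn, Real.rpow_one,
      ← Real.sqrt_eq_rpow]
  rw [this, inv_eq_one_div, g]

/-! ### ζ values as sums over ℕ -/

noncomputable def zf (l : ℕ) (n : ℕ) : ℝ := if 0 < n then 1 / (n : ℝ) ^ l else 0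

lemma zetav_eq (l : ℕ) : zetav l = ∑' n : ℕ, zf l n := by
  rw [zetav]
  have hinj : Function.Injective (fun p : ℕ+ => (p : ℕ)) := fun a b h => PNat.coe_injective h
  have hsupp : Function.support (zf l) ⊆ Set.range (fun p : ℕ+ => (p : ℕ)) := by
    intro n hn
    rcases Nat.eq_zero_or_pos n with h0 | h0
    · exact absurd (by simp [zf, h0]) hn
    · exact ⟨⟨n, h0⟩, rfl⟩
  rw [← Function.Injective.tsum_eq hinj hsupp]
  refine tsum_congr fun p => ?_
  simp [zf, p.pos]

noncomputable def dzt (l₁ l₂ : ℕ) (q : ℕ × ℕ) : ℝ :=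
  if 0 < q.2 ∧ q.2 < q.1 then 1 / ((q.1 : ℝ) ^ l₁ * (q.2 : ℝ) ^ l₂) else 0

lemma dzt_nonneg (l₁ l₂ : ℕ) (q : ℕ × ℕ) : 0 ≤ dzt l₁ l₂ q := by
  unfold dzt; split <;> positivity

lemma dzeta_eq (l₁ l₂ : ℕ) : dzeta l₁ l₂ = ∑' q : ℕ × ℕ, dzt l₁ l₂ q := by
  rw [dzeta]
  set ψ : {q : ℕ+ × ℕ+ // q.2 < q.1} → ℕ × ℕ := fun p => ((p.1.1 : ℕ), (p.1.2 : ℕ)) with hψ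
  have hinj : Function.Injective ψ := by
    rintro ⟨⟨a, b⟩, h⟩ ⟨⟨c, d⟩, h'⟩ he
    simp only [hψ, Prod.mk.injEq] at he
    ext <;> simp [PNat.coe_injective he.1, PNat.coe_injective he.2]
  have hsupp : Function.support (dzt l₁ l₂) ⊆ Set.range ψ := by
    rintro ⟨m, n⟩ hq
    have h : 0 < n ∧ n < m := by
      by_contra h; simp [dzt, h] at hq
    exact ⟨⟨(⟨m, lt_trans h.1 h.2⟩, ⟨n, h.1⟩), by exact_mod_cast h.2⟩, rfl⟩
  rw [← Function.Injective.tsum_eq hinj hsupp]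
  refine tsum_congr fun p => ?_
  have h1 : (0:ℕ) < (p.1.2 : ℕ) := p.1.2.pos
  have h2 : ((p.1.2 : ℕ) : ℕ) < (p.1.1 : ℕ) := by exact_mod_cast p.2
  simp [dzt, hψ, h1, h2]

lemma summable_dzt {l₁ l₂ : ℕ} (h₁ : 2 ≤ l₁) (h₂ : 1 ≤ l₂) : Summable (dzt l₁ l₂) := by
  have hM : Summable (fun q : ℕ × ℕ => g q.1 * g q.2) :=
    Summable.mul_of_nonneg summable_g summable_g g_nonneg g_nonneg
  refine hM.of_nonneg_of_le (dzt_nonneg l₁ l₂) ?_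
  rintro ⟨m, n⟩
  unfold dzt
  split
  · rename_i h
    obtain ⟨hn, hnm⟩ := h
    have hm : 0 < m := lt_trans hn hnm
    have hmr : (1:ℝ) ≤ m := by exact_mod_cast hm
    have hnr : (1:ℝ) ≤ n := by exact_mod_cast hn
    have hnm' : (n:ℝ) ≤ m := by exact_mod_cast le_of_lt hnm
    simp only [g, div_mul_div_comm, one_mul]
    have key : (m:ℝ) * Real.sqrt m * ((n:ℝ) * Real.sqrt n) ≤ (m:ℝ)^l₁ * (n:ℝ)^l₂ := by
      have h5 : Real.sqrt m * Real.sqrt n ≤ (m:ℝ) := by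
        rw [← Real.sqrt_mul (by positivity)]
        calc Real.sqrt ((m:ℝ) * n) ≤ Real.sqrt ((m:ℝ) * m) :=
              Real.sqrt_le_sqrt (by nlinarith)
          _ = m := Real.sqrt_mul_self (by positivity)
      have h6 : (m:ℝ) * (Real.sqrt m * Real.sqrt n) * (n:ℝ) ≤ (m:ℝ) * (m:ℝ) * (n:ℝ) :=
        mul_le_mul_of_nonneg_right (mul_le_mul_of_nonneg_left h5 (by linarith)) (by linarith)
      calc (m:ℝ) * Real.sqrt m * ((n:ℝ) * Real.sqrt n)
          = (m:ℝ) * (Real.sqrt m * Real.sqrt n) * (n:ℝ) := by ring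
        _ ≤ (m:ℝ) * (m:ℝ) * (n:ℝ) := h6
        _ = (m:ℝ)^2 * (n:ℝ)^1 := by ring
        _ ≤ (m:ℝ)^l₁ * (n:ℝ)^l₂ :=
            mul_le_mul (pow_le_pow_right₀ hmr h₁) (pow_le_pow_right₀ hnr h₂)
              (by positivity) (by positivity)
    exact one_div_le_one_div_of_le (by positivity) key
  · exact mul_nonneg (g_nonneg _) (g_nonneg _)

/-! ### Harmonic sums and the telescoping inner sum -/

noncomputable def hf (n m : ℕ) : ℝ :=
  if n < m ∧ m ≠ 2*n then 1/((m:ℝ)*((m:ℝ)-2*n)) else 0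

noncomputable def Hh (N : ℕ) : ℝ := ∑ k ∈ Finset.Icc 1 N, (1/(k:ℝ))

lemma Hh_zero : Hh 0 = 0 := by simp [Hh]

lemma Hh_succ (N : ℕ) : Hh (N+1) = Hh N + 1/((N:ℝ)+1) := by
  rw [Hh, Hh, Finset.sum_Icc_succ_top (by omega)]
  norm_num

lemma Hh_pred (M : ℕ) (hM : 0 < M) : Hh M = Hh (M-1) + 1/(M:ℝ) := by
  obtain ⟨j, rfl⟩ : ∃ j, M = j+1 := ⟨M-1, by omega⟩
  rw [Hh_succ]
  norm_num

lemma Hh_le_sqrt (m : ℕ) : Hh m ≤ 2 * Real.sqrt m := by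
  induction m with
  | zero => simp [Hh_zero]
  | succ M ih =>
    rw [Hh_succ]
    set a := Real.sqrt M with ha
    set b := Real.sqrt ((M:ℝ)+1) with hb
    have hb' : Real.sqrt ((M+1 : ℕ):ℝ) = b := by rw [hb]; push_cast; ring_nf
    have ha0 : 0 ≤ a := Real.sqrt_nonneg _
    have hb0 : 0 ≤ b := Real.sqrt_nonneg _
    have ha2 : a^2 = (M:ℝ) := Real.sq_sqrt (Nat.cast_nonneg M)
    have hb2 : b^2 = (M:ℝ)+1 := Real.sq_sqrt (by positivity)
    have hb1 : 1 ≤ b := by nlinarith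
    have hab : a ≤ b := by nlinarith
    have hble : b ≤ (M:ℝ)+1 := by nlinarith
    have key : (b-a)*(b+a) = 1 := by nlinarith
    have h2 : b + a ≤ 2*((M:ℝ)+1) := by linarith
    have h3 : 1 ≤ 2*(b-a)*((M:ℝ)+1) := by
      have := mul_le_mul_of_nonneg_left h2 (by linarith : (0:ℝ) ≤ b - a)
      nlinarith
    have h4 : 1/((M:ℝ)+1) ≤ 2*(b-a) := by
      rw [div_le_iff₀ (by positivity)]
      linarith
    rw [hb']
    linarith

lemma summable_hf (n : ℕ) : Summable (hf n) := by
  refine (summable_nat_add_iff (2*n+1)).1 ?_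
  have hbase : Summable (fun k : ℕ => 1/((k:ℝ)+1)^2) := by
    have := (summable_nat_add_iff (f := fun k : ℕ => 1/(k:ℝ)^2) 1).2
      (Real.summable_one_div_nat_pow.2 one_lt_two)
    refine this.congr fun k => ?_
    push_cast; ring
  refine hbase.of_nonneg_of_le (fun k => ?_) (fun k => ?_)
  · have h1 : n < k + (2*n+1) := by omega
    have h2 : k + (2*n+1) ≠ 2*n := by omega
    have h3 : ((k + (2*n+1) : ℕ):ℝ) - 2*n = (k:ℝ)+1 := by push_cast; ring
    rw [hf, if_pos ⟨h1, h2⟩, h3]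
    positivity
  · have h1 : n < k + (2*n+1) := by omega
    have h2 : k + (2*n+1) ≠ 2*n := by omega
    have h3 : ((k + (2*n+1) : ℕ):ℝ) - 2*n = (k:ℝ)+1 := by push_cast; ring
    rw [hf, if_pos ⟨h1, h2⟩, h3]
    have hk1 : (0:ℝ) < (k:ℝ)+1 := by positivity
    refine one_div_le_one_div_of_le (by positivity) ?_
    have : ((k:ℝ)+1) ≤ ((k + (2*n+1) : ℕ):ℝ) := by push_cast; linarith [Nat.cast_nonneg (α := ℝ) n]
    nlinarith

lemma partial_frac (c x : ℝ) (hc : c ≠ 0) (hx : x ≠ 0) (hx2 : x - 2*c ≠ 0) :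
    1/(x*(x-2*c)) = (1/(2*c)) * (1/(x-2*c) - 1/x) := by
  field_simp
  ring

lemma Qform (n : ℕ) (hn : 0 < n) :
    ∀ N, 2*n ≤ N →
      ∑ m ∈ Finset.Icc (n+1) N, hf n m
        = (1/(2*(n:ℝ))) * (3/(2*(n:ℝ)) - (Hh N - Hh (N - 2*n))) := by
  have hc : (0:ℝ) < (n:ℝ) := by exact_mod_cast hn
  refine Nat.le_induction ?_ ?_
  · have h2n : 2*n - 2*n = 0 := by omega
    rw [h2n, Hh_zero]
    have hsplit : Finset.Icc (n+1) (2*n) = insert (2*n) (Finset.Icc (n+1) (2*n-1)) := by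
      ext m; simp only [Finset.mem_Icc, Finset.mem_insert]; omega
    rw [hsplit, Finset.sum_insert (by simp only [Finset.mem_Icc]; omega)]
    have hzero : hf n (2*n) = 0 := by rw [hf, if_neg]; push_neg; intro h; omega
    rw [hzero, zero_add]
    have e1 : ∀ m ∈ Finset.Icc (n+1) (2*n-1),
        hf n m = (1/(2*(n:ℝ))) * (1/((m:ℝ)-2*n) - 1/(m:ℝ)) := by
      intro m hm
      simp only [Finset.mem_Icc] at hm
      have hcond : n < m ∧ m ≠ 2*n := ⟨by omega, by omega⟩
      have hm0 : ((m:ℝ)) ≠ 0 := by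
        have : (0:ℕ) < m := by omega
        have : (0:ℝ) < (m:ℝ) := by exact_mod_cast this
        linarith
      have hm2 : (m:ℝ) - 2*n ≠ 0 := by
        have : (m:ℝ) < 2*n := by exact_mod_cast (by omega : m < 2*n)
        linarith
      rw [hf, if_pos hcond, partial_frac (n:ℝ) (m:ℝ) (ne_of_gt hc) hm0 hm2]
    rw [Finset.sum_congr rfl e1, ← Finset.mul_sum, Finset.sum_sub_distrib]
    have hS1 : ∑ m ∈ Finset.Icc (n+1) (2*n-1), 1/((m:ℝ)-2*n) = - Hh (n-1) := by
      rw [Hh, ← Finset.sum_neg_distrib]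
      refine Finset.sum_nbij' (fun m => 2*n - m) (fun j => 2*n - j) ?_ ?_ ?_ ?_ ?_
      · intro a ha; simp only [Finset.mem_Icc] at ha ⊢; omega
      · intro a ha; simp only [Finset.mem_Icc] at ha ⊢; omega
      · intro a ha; simp only [Finset.mem_Icc] at ha; omega
      · intro a ha; simp only [Finset.mem_Icc] at ha; omega
      · intro a ha
        simp only [Finset.mem_Icc] at ha
        have hcast : ((2*n - a : ℕ):ℝ) = 2*(n:ℝ) - a := by
          rw [Nat.cast_sub (by omega)]; push_cast; ring
        rw [hcast, show 2*(n:ℝ) - (a:ℝ) = -((a:ℝ) - 2*(n:ℝ)) by ring, div_neg, neg_neg]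
    have hS2 : ∑ m ∈ Finset.Icc (n+1) (2*n-1), 1/(m:ℝ) = Hh (2*n-1) - Hh n := by
      have hcons := Finset.sum_Ico_consecutive (fun m => 1/(m:ℝ))
        (by omega : 1 ≤ n+1) (by omega : n+1 ≤ 2*n)
      have i1 : Finset.Ico 1 (n+1) = Finset.Icc 1 n := Finset.Ico_add_one_right_eq_Icc 1 n
      have i2 : Finset.Ico (n+1) (2*n) = Finset.Icc (n+1) (2*n-1) := by
        ext m; simp only [Finset.mem_Ico, Finset.mem_Icc]; omega
      have i3 : Finset.Ico 1 (2*n) = Finset.Icc 1 (2*n-1) := by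
        ext m; simp only [Finset.mem_Ico, Finset.mem_Icc]; omega
      rw [i1, i2, i3] at hcons
      rw [Hh, Hh, ← hcons]; ring
    rw [hS1, hS2]
    have hHn : Hh n = Hh (n-1) + 1/(n:ℝ) := Hh_pred n hn
    have hH2n : Hh (2*n) = Hh (2*n-1) + 1/(2*(n:ℝ)) := by
      have := Hh_pred (2*n) (by omega)
      rw [this]
      congr 1
      push_cast
      ring
    rw [hHn, hH2n]
    field_simp
    ring
  · intro N hN IH
    rw [Finset.sum_Icc_succ_top (by omega : n+1 ≤ N+1), IH]
    have hcond : n < N+1 ∧ N+1 ≠ 2*n := ⟨by omega, by omega⟩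
    have hx0 : ((N:ℝ)+1) ≠ 0 := by positivity
    have hsub : ((N:ℝ)+1) - 2*(n:ℝ) = ((N - 2*n : ℕ):ℝ) + 1 := by
      rw [Nat.cast_sub (by omega)]; push_cast; ring
    have hx2 : ((N:ℝ)+1) - 2*(n:ℝ) ≠ 0 := by
      rw [hsub]
      have h0 : (0:ℝ) ≤ ((N - 2*n : ℕ):ℝ) := Nat.cast_nonneg _
      positivity
    have hfval : hf n (N+1) = (1/(2*(n:ℝ))) * (1/(((N:ℝ)+1)-2*(n:ℝ)) - 1/((N:ℝ)+1)) := by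
      rw [hf, if_pos hcond]
      push_cast
      rw [partial_frac (n:ℝ) ((N:ℝ)+1) (ne_of_gt hc) hx0 hx2]
    rw [hfval]
    have hHN : Hh (N+1) = Hh N + 1/((N:ℝ)+1) := Hh_succ N
    have hHN2 : Hh (N+1 - 2*n) = Hh (N - 2*n) + 1/(((N:ℝ)+1) - 2*(n:ℝ)) := by
      have h1 : N+1-2*n = (N-2*n)+1 := by omega
      rw [h1, Hh_succ]
      congr 1
      rw [hsub]
    rw [hHN, hHN2]
    ring

lemma tendsto_Rzero (n : ℕ) (hn : 0 < n) :
    Tendsto (fun N => Hh N - Hh (N - 2*n)) atTop (nhds 0) := by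
  have hb : Tendsto (fun N : ℕ => (2*n:ℝ)/((N - 2*n : ℕ):ℝ)) atTop (nhds 0) := by
    refine Tendsto.div_atTop tendsto_const_nhds ?_
    exact tendsto_natCast_atTop_atTop.comp (tendsto_sub_atTop_nat (2*n))
  refine squeeze_zero' ?_ ?_ hb
  · filter_upwards [eventually_ge_atTop (2*n+1)] with N hN
    have hsub : Finset.Icc 1 (N - 2*n) ⊆ Finset.Icc 1 N :=
      Finset.Icc_subset_Icc le_rfl (by omega)
    have hle := Finset.sum_le_sum_of_subset_of_nonneg (f := fun k : ℕ => 1/(k:ℝ)) hsub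
      (fun i _ _ => by positivity)
    simp only [Hh]
    linarith
  · filter_upwards [eventually_ge_atTop (2*n+1)] with N hN
    have hsplit := Finset.sum_Ico_consecutive (fun m => 1/(m:ℝ))
      (by omega : 1 ≤ N - 2*n + 1) (by omega : N - 2*n + 1 ≤ N + 1)
    have i1 : Finset.Ico 1 (N - 2*n + 1) = Finset.Icc 1 (N - 2*n) := Finset.Ico_add_one_right_eq_Icc _ _
    have i2 : Finset.Ico 1 (N+1) = Finset.Icc 1 N := Finset.Ico_add_one_right_eq_Icc _ _
    rw [i1, i2] at hsplit
    have hR : Hh N - Hh (N - 2*n) = ∑ m ∈ Finset.Ico (N - 2*n + 1) (N+1), 1/(m:ℝ) := by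
      rw [Hh, Hh, ← hsplit]; ring
    rw [hR]
    have hcard : (Finset.Ico (N - 2*n + 1) (N+1)).card = 2*n := by
      rw [Nat.card_Ico]; omega
    have hbound : ∀ m ∈ Finset.Ico (N - 2*n + 1) (N+1), 1/(m:ℝ) ≤ 1/((N - 2*n : ℕ):ℝ) := by
      intro m hm
      simp only [Finset.mem_Ico] at hm
      have h1 : (0:ℝ) < ((N - 2*n : ℕ):ℝ) := by
        have : 0 < N - 2*n := by omega
        exact_mod_cast this
      refine one_div_le_one_div_of_le h1 ?_
      exact_mod_cast (by omega : N - 2*n ≤ m)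
    calc ∑ m ∈ Finset.Ico (N - 2*n + 1) (N+1), 1/(m:ℝ)
        ≤ (Finset.Ico (N - 2*n + 1) (N+1)).card • (1/((N - 2*n : ℕ):ℝ)) :=
          Finset.sum_le_card_nsmul _ _ _ hbound
      _ = (2*n:ℝ)/((N - 2*n : ℕ):ℝ) := by
          rw [hcard, nsmul_eq_mul]; push_cast; ring

lemma tsum_hf (n : ℕ) (hn : 0 < n) : ∑' m, hf n m = 3/(4*(n:ℝ)^2) := by
  have hc : (0:ℝ) < (n:ℝ) := by exact_mod_cast hn
  have hs := summable_hf n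
  have ht := hs.hasSum.tendsto_sum_nat
  have hT : Tendsto (fun N => ∑ i ∈ Finset.range N, hf n i) atTop (nhds (3/(4*(n:ℝ)^2))) := by
    have hφ : Tendsto (fun N : ℕ => (1/(2*(n:ℝ))) * (3/(2*(n:ℝ)) - (Hh (N-1) - Hh (N-1-2*n))))
        atTop (nhds ((1/(2*(n:ℝ))) * (3/(2*(n:ℝ)) - 0))) := by
      refine Tendsto.const_mul _ (Tendsto.sub tendsto_const_nhds ?_)
      exact (tendsto_Rzero n hn).comp (tendsto_sub_atTop_nat 1)
    have hval : (1/(2*(n:ℝ))) * (3/(2*(n:ℝ)) - 0) = 3/(4*(n:ℝ)^2) := by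
      field_simp; ring
    rw [hval] at hφ
    refine hφ.congr' ?_
    filter_upwards [eventually_ge_atTop (2*n+2)] with N hN
    have h1 : ∑ m ∈ Finset.Icc (n+1) (N-1), hf n m = ∑ i ∈ Finset.range N, hf n i := by
      refine Finset.sum_subset ?_ ?_
      · intro m hm
        simp only [Finset.mem_Icc] at hm
        simp only [Finset.mem_range]
        omega
      · intro m hm hm'
        simp only [Finset.mem_range] at hm
        simp only [Finset.mem_Icc] at hm'
        rw [hf, if_neg]
        push_neg
        intro h
        omega
    rw [← h1, Qform n hn (N-1) (by omega)]
  exact tendsto_nhds_unique ht hT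

/-! ### The three pieces -/

noncomputable def At (l : ℕ) (q : ℕ × ℕ) : ℝ :=
  if 0 < q.2 ∧ q.2 < q.1 ∧ q.1 ≠ 2*q.2 then
    2/((q.2:ℝ)^(l-2)*(q.1:ℝ)*((q.1:ℝ)-2*(q.2:ℝ))) else 0

noncomputable def Bt (l : ℕ) (q : ℕ × ℕ) : ℝ :=
  if 0 < q.2 ∧ q.2 < q.1 ∧ q.1 ≠ 2*q.2 then
    (2:ℝ)^(l-1)/((q.1:ℝ)^(l-1)*((q.1:ℝ)-2*(q.2:ℝ))) else 0

noncomputable def Dt (l : ℕ) (q : ℕ × ℕ) : ℝ :=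
  if 0 < q.2 ∧ q.1 = 2*q.2 then ((l:ℝ)-2)*(2:ℝ)^(l-1)/(q.1:ℝ)^l else 0

lemma core (l : ℕ) (hl : 3 ≤ l) (m n : ℕ) (hn : 0 < n) (hmn : n < m) :
    ∑ l₁ ∈ Finset.Icc 2 (l-1), (2:ℝ)^(l₁-1) / ((m:ℝ)^l₁ * (n:ℝ)^(l-l₁))
      = if m = 2*n then ((l:ℝ)-2)*2^(l-1)/(m:ℝ)^l
        else 2/((n:ℝ)^(l-2)*(m:ℝ)*((m:ℝ)-2*(n:ℝ)))
              - 2^(l-1)/((m:ℝ)^(l-1)*((m:ℝ)-2*(n:ℝ))) := by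
  obtain ⟨k, rfl⟩ : ∃ k, l = k+3 := ⟨l-3, by omega⟩
  have ha : (0:ℝ) < (m:ℝ) := by exact_mod_cast lt_trans hn hmn
  have hb : (0:ℝ) < (n:ℝ) := by exact_mod_cast hn
  have ha' : (m:ℝ) ≠ 0 := ne_of_gt ha
  have hb' : (n:ℝ) ≠ 0 := ne_of_gt hb
  have hIcc : Finset.Icc 2 (k+3-1) = Finset.Ico 2 (k+3) := by
    ext x; simp only [Finset.mem_Icc, Finset.mem_Ico]; omega
  rw [hIcc]
  have hterm : ∀ l₁ ∈ Finset.Ico 2 (k+3),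
      (2:ℝ)^(l₁-1) / ((m:ℝ)^l₁ * (n:ℝ)^(k+3-l₁))
        = (1/(2*(n:ℝ)^(k+3))) * (2*(n:ℝ)/(m:ℝ))^l₁ := by
    intro l₁ hl₁
    simp only [Finset.mem_Ico] at hl₁
    have e2 : (n:ℝ)^(l₁) * (n:ℝ)^(k+3-l₁) = (n:ℝ)^(k+3) := by
      rw [← pow_add]; congr 1; omega
    have e3 : (2:ℝ)^(l₁) = 2 * 2^(l₁-1) := by
      conv_lhs => rw [show l₁ = (l₁-1)+1 from by omega]
      rw [pow_succ]; ring
    rw [div_pow, mul_pow]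
    have e4 : (1/(2*(n:ℝ)^(k+3))) * ((2:ℝ)^l₁*(n:ℝ)^l₁/(m:ℝ)^l₁)
        = ((2:ℝ)^l₁*(n:ℝ)^l₁) / (2*(n:ℝ)^(k+3)*(m:ℝ)^l₁) := by ring
    rw [e4, div_eq_div_iff (by positivity) (by positivity), e3, ← e2]
    ring
  rw [Finset.sum_congr rfl hterm, ← Finset.mul_sum]
  by_cases hm2 : m = 2*n
  · rw [if_pos hm2]
    have hmr : (m:ℝ) = 2*(n:ℝ) := by rw [hm2]; push_cast; ring
    have hr : 2*(n:ℝ)/(m:ℝ) = 1 := by rw [hmr]; field_simp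
    rw [hr]
    simp only [one_pow, Finset.sum_const, Nat.card_Ico, nsmul_eq_mul]
    rw [show k+3-2 = k+1 from rfl, show k+3-1 = k+2 from rfl, hmr, mul_pow]
    push_cast
    field_simp
    ring
  · rw [if_neg hm2]
    have hd : (m:ℝ) - 2*(n:ℝ) ≠ 0 := by
      refine sub_ne_zero.2 ?_
      intro h
      exact hm2 (by exact_mod_cast h)
    have hd' : 2*(n:ℝ) - (m:ℝ) ≠ 0 := fun h => hd (by linarith)
    have hr1 : 2*(n:ℝ)/(m:ℝ) ≠ 1 := by
      intro h
      rw [div_eq_one_iff_eq ha'] at h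
      exact hd (by linarith)
    rw [geom_sum_Ico hr1 (by omega : 2 ≤ k+3)]
    rw [div_pow, mul_pow, div_pow, mul_pow]
    rw [show k+3-2 = k+1 from rfl, show k+3-1 = k+2 from rfl]
    field_simp
    ring

lemma Gt_eq (l : ℕ) (hl : 3 ≤ l) (q : ℕ × ℕ) :
    ∑ l₁ ∈ Finset.Icc 2 (l-1), (2:ℝ)^(l₁-1) * dzt l₁ (l-l₁) q
      = At l q - Bt l q + Dt l q := by
  rcases q with ⟨m, n⟩
  by_cases h : 0 < n ∧ n < m
  · obtain ⟨hn, hmn⟩ := h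
    have hsum : ∑ l₁ ∈ Finset.Icc 2 (l-1), (2:ℝ)^(l₁-1) * dzt l₁ (l-l₁) (m, n)
        = ∑ l₁ ∈ Finset.Icc 2 (l-1), (2:ℝ)^(l₁-1) / ((m:ℝ)^l₁ * (n:ℝ)^(l-l₁)) := by
      refine Finset.sum_congr rfl fun l₁ _ => ?_
      rw [dzt, if_pos ⟨hn, hmn⟩]
      ring
    rw [hsum, core l hl m n hn hmn]
    by_cases hm2 : m = 2*n
    · rw [if_pos hm2, At, Bt, Dt]
      rw [if_neg (fun hc : 0 < n ∧ n < m ∧ m ≠ 2*n => hc.2.2 hm2),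
        if_neg (fun hc : 0 < n ∧ n < m ∧ m ≠ 2*n => hc.2.2 hm2), if_pos ⟨hn, hm2⟩]
      ring
    · rw [if_neg hm2, At, Bt, Dt]
      rw [if_pos ⟨hn, hmn, hm2⟩, if_pos ⟨hn, hmn, hm2⟩, if_neg]
      · ring
      · push_neg; intro _; omega
  · have hz : ∀ l₁ ∈ Finset.Icc 2 (l-1), (2:ℝ)^(l₁-1) * dzt l₁ (l-l₁) (m, n) = 0 := by
      intro l₁ _
      rw [dzt, if_neg h, mul_zero]
    rw [Finset.sum_congr rfl hz, Finset.sum_const, smul_zero]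
    rw [At, Bt, Dt, if_neg, if_neg, if_neg]
    · ring
    · push_neg
      intro hn hm
      exfalso
      exact h ⟨hn, by omega⟩
    · push_neg; intro hn hmn; exact absurd ⟨hn, hmn⟩ h
    · push_neg; intro hn hmn; exact absurd ⟨hn, hmn⟩ h

/-! ### Sum of Bt vanishes -/

lemma Bt_zero_outside (l m : ℕ) {n : ℕ} (hn : n ∉ Finset.Ico 1 m) : Bt l (m, n) = 0 := by
  rw [Bt, if_neg]
  simp only [Finset.mem_Ico] at hn
  push_neg
  intro h1 h2
  omega

lemma inj_bound (m : ℕ) (s : Finset ℕ) (ψ : ℕ → ℕ)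
    (hinj : ∀ x ∈ s, ∀ y ∈ s, ψ x = ψ y → x = y)
    (himg : ∀ n ∈ s, ψ n ∈ Finset.Icc 1 m) :
    ∑ n ∈ s, 1/((ψ n : ℕ):ℝ) ≤ Hh m := by
  rw [← Finset.sum_image (f := fun j : ℕ => 1/(j:ℝ)) hinj]
  refine Finset.sum_le_sum_of_subset_of_nonneg ?_ (fun i _ _ => by positivity)
  intro j hj
  simp only [Finset.mem_image] at hj
  obtain ⟨n, hn, rfl⟩ := hj
  exact himg n hn

lemma Bt_fiber_sum_bound (l : ℕ) (hl : 3 ≤ l) (m : ℕ) :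
    ∑ n ∈ Finset.Ico 1 m, |Bt l (m, n)| ≤ (2:ℝ)^(l-1) * 4 * g m := by
  rcases Nat.eq_zero_or_pos m with h0 | hm
  · subst h0
    simp [g]
  have hmr : (1:ℝ) ≤ (m:ℝ) := by exact_mod_cast hm
  have hmr0 : (0:ℝ) < (m:ℝ) := by linarith
  have step1 : ∀ n ∈ Finset.Ico 1 m,
      |Bt l (m, n)| = ((2:ℝ)^(l-1)/(m:ℝ)^(l-1)) *
        (if m ≠ 2*n then 1/((((m-2*n)+(2*n-m) : ℕ)):ℝ) else 0) := by
    intro n hn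
    simp only [Finset.mem_Ico] at hn
    by_cases hm2 : m = 2*n
    · rw [Bt, if_neg (fun hc : 0 < n ∧ n < m ∧ m ≠ 2*n => hc.2.2 hm2), if_neg (by omega)]
      simp
    · rw [Bt, if_pos ⟨by omega, by omega, hm2⟩, if_pos hm2]
      have hcast : ((((m-2*n)+(2*n-m) : ℕ)):ℝ) = |(m:ℝ) - 2*(n:ℝ)| := by
        rcases le_or_gt (2*n) m with h | h
        · rw [abs_of_nonneg (by
            have : (2*(n:ℝ)) ≤ m := by exact_mod_cast h
            linarith)]
          rw [show (m-2*n)+(2*n-m) = m - 2*n from by omega, Nat.cast_sub h]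
          push_cast; ring
        · rw [abs_of_nonpos (by
            have : (m:ℝ) ≤ 2*(n:ℝ) := by exact_mod_cast le_of_lt h
            linarith)]
          rw [show (m-2*n)+(2*n-m) = 2*n - m from by omega, Nat.cast_sub (le_of_lt h)]
          push_cast; ring
      rw [hcast, abs_div, abs_mul]
      rw [abs_of_nonneg (by positivity : (0:ℝ) ≤ (2:ℝ)^(l-1)),
        abs_of_nonneg (by positivity : (0:ℝ) ≤ (m:ℝ)^(l-1))]
      rw [div_mul_eq_div_div, div_div]
      rw [mul_one_div, div_div]
  rw [Finset.sum_congr rfl step1, ← Finset.mul_sum]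
  have hsum2 : ∑ n ∈ Finset.Ico 1 m,
      (if m ≠ 2*n then 1/((((m-2*n)+(2*n-m) : ℕ)):ℝ) else 0) ≤ 2 * Hh m := by
    rw [← Finset.sum_filter]
    set t := Finset.filter (fun n => m ≠ 2*n) (Finset.Ico 1 m) with ht
    have hmem : ∀ n ∈ t, 1 ≤ n ∧ n < m ∧ m ≠ 2*n := by
      intro n hn
      simp only [ht, Finset.mem_filter, Finset.mem_Ico] at hn
      exact ⟨hn.1.1, hn.1.2, hn.2⟩
    have hsplit : t = t.filter (fun n => 2*n < m) ∪ t.filter (fun n => m < 2*n) := by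
      ext n
      simp only [Finset.mem_union, Finset.mem_filter, ht, Finset.mem_Ico]
      omega
    have hdisj : Disjoint (t.filter (fun n => 2*n < m)) (t.filter (fun n => m < 2*n)) := by
      rw [Finset.disjoint_left]
      intro n h1 h2
      simp only [Finset.mem_filter] at h1 h2
      omega
    rw [hsplit, Finset.sum_union hdisj]
    have hb1 : ∑ n ∈ t.filter (fun n => 2*n < m), 1/((((m-2*n)+(2*n-m) : ℕ)):ℝ) ≤ Hh m := by
      have e : ∀ n ∈ t.filter (fun n => 2*n < m),
          1/((((m-2*n)+(2*n-m) : ℕ)):ℝ) = 1/(((m-2*n : ℕ)):ℝ) := by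
        intro n hn
        simp only [Finset.mem_filter] at hn
        congr 2
        omega
      rw [Finset.sum_congr rfl e]
      refine inj_bound m _ (fun n => m - 2*n) ?_ ?_
      · intro x hx y hy hxy
        simp only [Finset.mem_filter] at hx hy
        omega
      · intro n hn
        simp only [Finset.mem_filter] at hn
        have := hmem n hn.1
        simp only [Finset.mem_Icc]
        omega
    have hb2 : ∑ n ∈ t.filter (fun n => m < 2*n), 1/((((m-2*n)+(2*n-m) : ℕ)):ℝ) ≤ Hh m := by
      have e : ∀ n ∈ t.filter (fun n => m < 2*n),
          1/((((m-2*n)+(2*n-m) : ℕ)):ℝ) = 1/(((2*n-m : ℕ)):ℝ) := by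
        intro n hn
        simp only [Finset.mem_filter] at hn
        congr 2
        omega
      rw [Finset.sum_congr rfl e]
      refine inj_bound m _ (fun n => 2*n - m) ?_ ?_
      · intro x hx y hy hxy
        simp only [Finset.mem_filter] at hx hy
        have hx' := hmem x hx.1
        have hy' := hmem y hy.1
        omega
      · intro n hn
        simp only [Finset.mem_filter] at hn
        have := hmem n hn.1
        simp only [Finset.mem_Icc]
        omega
    linarith
  have hHh : 2 * Hh m ≤ 4 * Real.sqrt m := by
    have := Hh_le_sqrt m
    linarith
  have hnonneg : (0:ℝ) ≤ (2:ℝ)^(l-1)/(m:ℝ)^(l-1) := by positivity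
  calc ((2:ℝ)^(l-1)/(m:ℝ)^(l-1)) * ∑ n ∈ Finset.Ico 1 m,
        (if m ≠ 2*n then 1/((((m-2*n)+(2*n-m) : ℕ)):ℝ) else 0)
      ≤ ((2:ℝ)^(l-1)/(m:ℝ)^(l-1)) * (4 * Real.sqrt m) :=
        mul_le_mul_of_nonneg_left (le_trans hsum2 hHh) hnonneg
    _ ≤ (2:ℝ)^(l-1) * 4 * g m := by
        rw [g]
        have hsq : Real.sqrt m * ((m:ℝ) * Real.sqrt m) = (m:ℝ)^2 := by
          rw [show Real.sqrt (m:ℝ) * ((m:ℝ) * Real.sqrt m) = (Real.sqrt m * Real.sqrt m) * m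
            from by ring, Real.mul_self_sqrt (by positivity)]
          ring
        have hple : (m:ℝ)^2 ≤ (m:ℝ)^(l-1) := pow_le_pow_right₀ hmr (by omega)
        have key : Real.sqrt m / (m:ℝ)^(l-1) ≤ 1/((m:ℝ) * Real.sqrt m) := by
          rw [div_le_div_iff₀ (by positivity) (by positivity)]
          rw [hsq]
          linarith
        calc ((2:ℝ)^(l-1)/(m:ℝ)^(l-1)) * (4 * Real.sqrt m)
            = ((2:ℝ)^(l-1) * 4) * (Real.sqrt m / (m:ℝ)^(l-1)) := by ring
          _ ≤ ((2:ℝ)^(l-1) * 4) * (1/((m:ℝ) * Real.sqrt m)) :=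
              mul_le_mul_of_nonneg_left key (by positivity)
          _ = (2:ℝ)^(l-1) * 4 * (1/((m:ℝ) * Real.sqrt m)) := by ring

lemma summable_Bt_abs (l : ℕ) (hl : 3 ≤ l) : Summable (fun q : ℕ × ℕ => |Bt l q|) := by
  refine (summable_prod_of_nonneg (fun q => abs_nonneg _)).2 ⟨?_, ?_⟩
  · intro m
    exact summable_of_ne_finset_zero (s := Finset.Ico 1 m)
      (fun n hn => by rw [Bt_zero_outside l m hn, abs_zero])
  · refine Summable.of_nonneg_of_le (fun m => tsum_nonneg (fun n => abs_nonneg _))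
      (fun m => ?_) ((summable_g.mul_left ((2:ℝ)^(l-1) * 4)))
    rw [tsum_eq_sum (s := Finset.Ico 1 m)
      (fun n hn => by rw [Bt_zero_outside l m hn, abs_zero])]
    exact Bt_fiber_sum_bound l hl m

lemma summable_Bt (l : ℕ) (hl : 3 ≤ l) : Summable (Bt l) :=
  (summable_Bt_abs l hl).of_abs

lemma tsum_Bt (l : ℕ) (hl : 3 ≤ l) : ∑' q : ℕ × ℕ, Bt l q = 0 := by
  rw [Summable.tsum_prod' (summable_Bt l hl) (fun m =>
    summable_of_ne_finset_zero (s := Finset.Ico 1 m) (fun n hn => Bt_zero_outside l m hn))]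
  rw [show (0:ℝ) = ∑' (m : ℕ), (0:ℝ) from (tsum_zero).symm]
  refine tsum_congr fun m => ?_
  rw [tsum_eq_sum (s := Finset.Ico 1 m) (fun n hn => Bt_zero_outside l m hn)]
  set t := Finset.filter (fun n => m ≠ 2*n) (Finset.Ico 1 m) with ht
  rw [← Finset.sum_subset (Finset.filter_subset _ _)
    (fun n hn hn' => by
      rw [Bt, if_neg]
      simp only [ht, Finset.mem_filter, Finset.mem_Ico] at hn hn'
      push_neg
      intro h1 h2
      by_contra h3
      exact hn' ⟨hn, h3⟩)]
  refine Finset.sum_involution (fun n _ => m - n) ?_ ?_ ?_ ?_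
  · intro n hn
    simp only [ht, Finset.mem_filter, Finset.mem_Ico] at hn
    obtain ⟨⟨h1, h2⟩, h3⟩ := hn
    rw [Bt, Bt, if_pos ⟨by omega, by omega, h3⟩, if_pos ⟨by omega, by omega, by omega⟩]
    have hc1 : ((m - n : ℕ):ℝ) = (m:ℝ) - n := by
      rw [Nat.cast_sub (by omega)]
    simp only [hc1]
    have e : (m:ℝ) - 2*((m:ℝ) - (n:ℝ)) = -((m:ℝ) - 2*(n:ℝ)) := by ring
    rw [e, mul_neg, div_neg]
    exact add_neg_cancel _
  · intro n hn _
    simp only [ht, Finset.mem_filter, Finset.mem_Ico] at hn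
    omega
  · intro n hn
    dsimp only
    simp only [ht, Finset.mem_filter, Finset.mem_Ico] at hn ⊢
    omega
  · intro n hn
    simp only [ht, Finset.mem_filter, Finset.mem_Ico] at hn
    omega

/-! ### Sum of Dt -/

lemma Dt_nonneg (l : ℕ) (hl : 3 ≤ l) (q : ℕ × ℕ) : 0 ≤ Dt l q := by
  rw [Dt]
  split
  · have : (2:ℝ) ≤ (l:ℝ) := by exact_mod_cast (by omega : 2 ≤ l)
    have h2 : (0:ℝ) ≤ (l:ℝ) - 2 := by linarith
    positivity
  · exact le_rfl

lemma summable_Dt (l : ℕ) (hl : 3 ≤ l) : Summable (Dt l) := by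
  have hl2 : (0:ℝ) ≤ (l:ℝ) - 2 := by
    have : (2:ℝ) ≤ (l:ℝ) := by exact_mod_cast (by omega : 2 ≤ l)
    linarith
  have hC : (0:ℝ) ≤ ((l:ℝ)-2) * (2:ℝ)^(l-1) := mul_nonneg hl2 (by positivity)
  refine Summable.of_nonneg_of_le (Dt_nonneg l hl) (fun q => ?_)
    ((summable_dzt (le_refl 2) (le_refl 1)).mul_left (((l:ℝ)-2) * (2:ℝ)^(l-1)))
  rcases q with ⟨m, n⟩
  rw [Dt]
  split
  · rename_i hcnd
    obtain ⟨hn, hm2⟩ := hcnd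
    have hnm : n < m := by omega
    have hdz : dzt 2 1 (m, n) = 1/((m:ℝ)^2 * (n:ℝ)^1) := by rw [dzt, if_pos ⟨hn, hnm⟩]
    rw [hdz]
    have hmr : (1:ℝ) ≤ (m:ℝ) := by exact_mod_cast (by omega : 1 ≤ m)
    have hnr : (1:ℝ) ≤ (n:ℝ) := by exact_mod_cast hn
    have hkey : (m:ℝ)^2 * (n:ℝ)^1 ≤ (m:ℝ)^l := by
      have e : (m:ℝ)^l = (m:ℝ)^2 * (m:ℝ)^(l-2) := by
        rw [← pow_add]; congr 1; omega
      rw [e, pow_one]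
      have h1 : (n:ℝ) ≤ (m:ℝ)^(l-2) := by
        have h2 : (m:ℝ) ≤ (m:ℝ)^(l-2) := le_self_pow₀ hmr (by omega)
        have h3 : (n:ℝ) ≤ (m:ℝ) := by exact_mod_cast le_of_lt hnm
        linarith
      exact mul_le_mul_of_nonneg_left h1 (by positivity)
    calc ((l:ℝ)-2)*(2:ℝ)^(l-1)/(m:ℝ)^l
        = ((l:ℝ)-2)*(2:ℝ)^(l-1) * (1/(m:ℝ)^l) := by ring
      _ ≤ ((l:ℝ)-2)*(2:ℝ)^(l-1) * (1/((m:ℝ)^2*(n:ℝ)^1)) := by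
          refine mul_le_mul_of_nonneg_left (one_div_le_one_div_of_le (by positivity) hkey) hC
  · exact mul_nonneg hC (dzt_nonneg 2 1 (m, n))

lemma tsum_Dt (l : ℕ) (hl : 3 ≤ l) : ∑' q : ℕ × ℕ, Dt l q = (((l:ℝ)-2)/2) * zetav l := by
  have hinj : Function.Injective (fun n : ℕ => ((2*n, n) : ℕ × ℕ)) := by
    intro a b h
    simpa using congrArg Prod.snd h
  have hsupp : Function.support (Dt l) ⊆ Set.range (fun n : ℕ => ((2*n, n) : ℕ × ℕ)) := by
    rintro ⟨m, n⟩ hq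
    have h : 0 < n ∧ m = 2*n := by
      by_contra h
      rw [Function.mem_support, Dt, if_neg h] at hq
      exact hq rfl
    exact ⟨n, by simp [h.2]⟩
  rw [← Function.Injective.tsum_eq hinj hsupp]
  have hpt : ∀ n : ℕ, Dt l (2*n, n) = (((l:ℝ)-2)/2) * zf l n := by
    intro n
    rcases Nat.eq_zero_or_pos n with h0 | h0
    · subst h0
      rw [Dt, if_neg (by simp), zf, if_neg (by simp), mul_zero]
    · rw [Dt, if_pos ⟨h0, rfl⟩, zf, if_pos h0]
      have hnr : (0:ℝ) < (n:ℝ) := by exact_mod_cast h0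
      have hcast : (((2*n : ℕ)):ℝ)^l = (2:ℝ)^l * (n:ℝ)^l := by
        push_cast
        rw [mul_pow]
      have e2 : (2:ℝ)^l = 2 * 2^(l-1) := by
        conv_lhs => rw [show l = (l-1)+1 from by omega]
        rw [pow_succ]; ring
      rw [hcast, e2]
      have h2 : (0:ℝ) < (2:ℝ)^(l-1) := by positivity
      field_simp
  rw [tsum_congr hpt, tsum_mul_left, zetav_eq]

/-! ### Sum over l₁ (the G function) and At -/

lemma summable_Gt (l : ℕ) (hl : 3 ≤ l) :
    Summable (fun q : ℕ × ℕ => ∑ l₁ ∈ Finset.Icc 2 (l-1), (2:ℝ)^(l₁-1) * dzt l₁ (l-l₁) q) := by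
  refine summable_sum (fun l₁ hl₁ => ?_)
  simp only [Finset.mem_Icc] at hl₁
  exact (summable_dzt (by omega) (by omega)).mul_left _

lemma summable_At (l : ℕ) (hl : 3 ≤ l) : Summable (At l) := by
  have h : ∀ q, At l q = (∑ l₁ ∈ Finset.Icc 2 (l-1), (2:ℝ)^(l₁-1) * dzt l₁ (l-l₁) q)
      + Bt l q - Dt l q := by
    intro q
    have := Gt_eq l hl q
    linarith
  exact (((summable_Gt l hl).add (summable_Bt l hl)).sub (summable_Dt l hl)).congr
    (fun q => (h q).symm)

lemma At_fiber (l n : ℕ) (hn : 0 < n) :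
    (fun m => At l (m, n)) = fun m => (2/(n:ℝ)^(l-2)) * hf n m := by
  funext m
  rw [At, hf]
  by_cases hc : n < m ∧ m ≠ 2*n
  · rw [if_pos ⟨hn, hc.1, hc.2⟩, if_pos hc, div_mul_div_comm, mul_one, mul_assoc]
  · rw [if_neg (fun h => hc ⟨h.2.1, h.2.2⟩), if_neg hc, mul_zero]

lemma tsum_At (l : ℕ) (hl : 3 ≤ l) : ∑' q : ℕ × ℕ, At l q = (3/2) * zetav l := by
  have hswap : ∑' q : ℕ × ℕ, At l q = ∑' q : ℕ × ℕ, At l (q.2, q.1) := by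
    exact ((Equiv.prodComm ℕ ℕ).tsum_eq (At l)).symm
  rw [hswap]
  have hA' : Summable (fun q : ℕ × ℕ => At l (q.2, q.1)) :=
    ((Equiv.prodComm ℕ ℕ).summable_iff (f := At l)).2 (summable_At l hl)
  have hfib : ∀ n : ℕ, Summable (fun m => At l (m, n)) := by
    intro n
    rcases Nat.eq_zero_or_pos n with h0 | h0
    · refine summable_zero.congr (fun m => ?_)
      subst h0
      rw [At, if_neg (fun h => by exact absurd h.1 (by omega))]
    · rw [At_fiber l n h0]
      exact (summable_hf n).mul_left _
  rw [Summable.tsum_prod' hA' (fun n => hfib n)]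
  have hval : ∀ n : ℕ, ∑' m, At l (m, n) = (3/2) * zf l n := by
    intro n
    rcases Nat.eq_zero_or_pos n with h0 | h0
    · subst h0
      rw [zf, if_neg (by omega), mul_zero]
      rw [show (0:ℝ) = ∑' (m : ℕ), (0:ℝ) from tsum_zero.symm]
      refine tsum_congr fun m => ?_
      rw [At, if_neg (fun h => by exact absurd h.1 (by omega))]
    · rw [At_fiber l n h0, tsum_mul_left, tsum_hf n h0]
      have hnr : (0:ℝ) < (n:ℝ) := by exact_mod_cast h0
      have hp : (n:ℝ)^(l-2) * (n:ℝ)^2 = (n:ℝ)^l := by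
        rw [← pow_add]; congr 1; omega
      rw [zf, if_pos h0]
      calc (2/(n:ℝ)^(l-2)) * (3/(4*(n:ℝ)^2))
          = (3/2) * (1/((n:ℝ)^(l-2)*(n:ℝ)^2)) := by ring
        _ = (3/2) * (1/(n:ℝ)^l) := by rw [hp]
  rw [tsum_congr hval, tsum_mul_left, zetav_eq]

end OZ

theorem stmt12 (l : ℕ) (hl : 3 ≤ l) :
    ∑ l₁ ∈ Finset.Icc 2 (l - 1), (2 : ℝ) ^ (l₁ - 1) * dzeta l₁ (l - l₁)
      = (((l : ℝ) + 1) / 2) * zetav l := by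
  classical
  have step1 : ∀ l₁ ∈ Finset.Icc 2 (l-1),
      (2:ℝ)^(l₁-1) * dzeta l₁ (l-l₁) = ∑' q : ℕ × ℕ, (2:ℝ)^(l₁-1) * OZ.dzt l₁ (l-l₁) q := by
    intro l₁ _
    rw [OZ.dzeta_eq, tsum_mul_left]
  rw [Finset.sum_congr rfl step1]
  rw [← Summable.tsum_finsetSum (fun l₁ hl₁ => by
    simp only [Finset.mem_Icc] at hl₁
    exact (OZ.summable_dzt (by omega) (by omega)).mul_left _)]
  rw [tsum_congr (OZ.Gt_eq l hl)]
  rw [Summable.tsum_add ((OZ.summable_At l hl).sub (OZ.summable_Bt l hl)) (OZ.summable_Dt l hl)]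
  rw [Summable.tsum_sub (OZ.summable_At l hl) (OZ.summable_Bt l hl)]
  rw [OZ.tsum_At l hl, OZ.tsum_Bt l hl, OZ.tsum_Dt l hl]
  ring
end

section
/- For every even integer l ≥ 4, T_l(−1, 1) = −ζ(l)/2, where T_l(x,y) = ∑_{l₁ ≥ 2, l₂ ≥ 1, l₁+l₂=l} x^{l₁−1} y^{l₂−1} ζ(l₁, l₂); equivalently, the alternating sum ∑ (−1)^{l₁−1} ζ(l₁, l₂) over such pairs equals −ζ(l)/2. -/
open scoped BigOperators
open Finset
open Filter Topology

abbrev PP := {q : ℕ+ × ℕ+ // q.2 < q.1}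

lemma summable_pnat_sq : Summable (fun n : ℕ+ => 1/(n:ℝ)^2) := by
  have h : Summable (fun n : ℕ => 1/(n:ℝ)^2) := Real.summable_one_div_nat_pow.mpr one_lt_two
  exact h.comp_injective (fun a b h => PNat.coe_injective h)

lemma summable_master : Summable (fun q : PP => 1/((q.1.1:ℝ)^2 * (q.1.2:ℝ)^2)) := by
  have h : Summable (fun q : ℕ+ × ℕ+ => (1/(q.1:ℝ)^2) * (1/(q.2:ℝ)^2)) := by
    apply Summable.mul_of_nonneg summable_pnat_sq summable_pnat_sq <;>
      exact fun n => by positivity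
  have h2 := h.subtype {q : ℕ+ × ℕ+ | q.2 < q.1}
  refine h2.congr (fun q => ?_)
  simp only [Function.comp_apply, one_div, ← mul_inv]

lemma summable_of_master (f : PP → ℝ) (h0 : ∀ q, 0 ≤ f q)
    (hle : ∀ q : PP, f q ≤ 1/((q.1.1:ℝ)^2 * (q.1.2:ℝ)^2)) : Summable f :=
  Summable.of_nonneg_of_le h0 hle summable_master

lemma q_facts (q : PP) : 1 ≤ ((q.1.2:ℕ):ℝ) ∧ ((q.1.2:ℕ):ℝ) ≤ ((q.1.1:ℕ):ℝ) := by
  constructor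
  · exact_mod_cast q.1.2.one_le
  · exact_mod_cast le_of_lt ((PNat.coe_lt_coe _ _).mpr q.2)

lemma pow_ineq {m n : ℝ} (hn : 1 ≤ n) (hnm : n ≤ m) {a b : ℕ} (ha : 2 ≤ a) (hb : 1 ≤ b) (hab : 4 ≤ a + b) :
    m^2 * n^2 ≤ m^a * n^b := by
  have hm : 1 ≤ m := hn.trans hnm
  rcases Nat.lt_or_ge b 2 with hb2 | hb2
  · have hb1 : b = 1 := by omega
    subst hb1
    have h3 : m^2*n^2 ≤ m^3*n^1 := by
      calc m^2*n^2 = m^2*n*n := by ring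
        _ ≤ m^2*n*m := mul_le_mul_of_nonneg_left hnm (by positivity)
        _ = m^3*n^1 := by ring
    refine h3.trans ?_
    gcongr
    all_goals first | exact hm | exact hn | omega
  · gcongr
    all_goals first | exact hm | exact hn | omega

lemma summable_fa (l a : ℕ) (hl : 4 ≤ l) (ha : a ∈ Finset.Icc 2 (l-1)) :
    Summable (fun q : PP => 1 / ((q.1.1 : ℝ) ^ a * (q.1.2 : ℝ) ^ (l - a))) := by
  obtain ⟨ha2, hal⟩ := Finset.mem_Icc.mp ha
  refine summable_of_master _ (fun q => by positivity) (fun q => ?_)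
  obtain ⟨hn, hnm⟩ := q_facts q
  have h := pow_ineq hn hnm ha2 (b := l - a) (by omega) (by omega)
  have hpos : (0:ℝ) < (q.1.1:ℝ)^2 * (q.1.2:ℝ)^2 := by positivity
  exact one_div_le_one_div_of_le hpos h

lemma summable_fA (l : ℕ) (hl : 4 ≤ l) :
    Summable (fun q : PP => 1 / (((q.1.1 : ℝ) + (q.1.2:ℝ)) * (q.1.1 : ℝ) ^ (l-1))) := by
  refine summable_of_master _ (fun q => by positivity) (fun q => ?_)
  obtain ⟨hn, hnm⟩ := q_facts q
  have hm : 1 ≤ ((q.1.1:ℕ):ℝ) := hn.trans hnm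
  set m := ((q.1.1:ℕ):ℝ); set n := ((q.1.2:ℕ):ℝ)
  have hpos : (0:ℝ) < m^2 * n^2 := by positivity
  refine one_div_le_one_div_of_le hpos ?_
  have h1 : m^2*n^2 ≤ m * m^3 := by
    calc m^2*n^2 ≤ m^2*m^2 := by
          have := mul_le_mul_of_nonneg_left (mul_le_mul hnm hnm (by linarith) (by linarith)) (show (0:ℝ) ≤ m^2 by positivity)
          calc m^2*n^2 = m^2*(n*n) := by ring
            _ ≤ m^2*(m*m) := by exact this
            _ = m^2*m^2 := by ring
      _ = m * m^3 := by ring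
  refine h1.trans ?_
  gcongr
  all_goals first | linarith | omega

lemma summable_fB (l : ℕ) (hl : 4 ≤ l) :
    Summable (fun q : PP => 1 / (((q.1.1 : ℝ) + (q.1.2:ℝ)) * (q.1.1 : ℝ) * (q.1.2:ℝ) ^ (l-2))) := by
  refine summable_of_master _ (fun q => by positivity) (fun q => ?_)
  obtain ⟨hn, hnm⟩ := q_facts q
  have hm : 1 ≤ ((q.1.1:ℕ):ℝ) := hn.trans hnm
  set m := ((q.1.1:ℕ):ℝ); set n := ((q.1.2:ℕ):ℝ)
  have hpos : (0:ℝ) < m^2 * n^2 := by positivity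
  refine one_div_le_one_div_of_le hpos ?_
  have h1 : m^2*n^2 ≤ (m+n) * m * n^2 := by
    have : m^2 ≤ (m+n)*m := by nlinarith
    exact mul_le_mul_of_nonneg_right this (by positivity)
  refine h1.trans ?_
  gcongr
  all_goals first | linarith | omega

lemma inner_eq (l : ℕ) (hl : 4 ≤ l) (hev : l % 2 = 0) {m n : ℝ} (hm : 1 ≤ m) (hn : 1 ≤ n) :
    ∑ a ∈ Finset.Icc 2 (l-1), (-1:ℝ)^(a-1) * (1/(m^a * n^(l-a)))
      = 1/((m+n)*m^(l-1)) - 1/((m+n)*m*n^(l-2)) := by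
  have hm0 : (0:ℝ) < m := by linarith
  have hn0 : (0:ℝ) < n := by linarith
  have hmn : (0:ℝ) < m + n := by linarith
  set u : ℕ → ℝ := fun i => (-1:ℝ)^i / ((m+n) * m^(i+1) * n^(l-2-i)) with hu
  have hIcc : Finset.Icc 2 (l-1) = Finset.Ico 2 l := by
    rw [← Finset.Ico_add_one_right_eq_Icc]
    congr 1
    omega
  rw [hIcc, Finset.sum_Ico_eq_sum_range]
  have hstep : ∀ i ∈ Finset.range (l - 2),
      (-1:ℝ)^(2+i-1) * (1/(m^(2+i) * n^(l-(2+i)))) = u (i+1) - u i := by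
    intro i hi
    have hi' : i < l - 2 := Finset.mem_range.mp hi
    have e1 : l - (2+i) = (l-3-i) + 1 := by omega
    have e2 : l - 2 - i = (l-3-i) + 1 := by omega
    have e3 : l - 2 - (i+1) = l-3-i := by omega
    have e4 : 2 + i - 1 = i + 1 := by omega
    simp only [hu, e1, e2, e3, e4]
    have hmp : (0:ℝ) < m^(i+1) := by positivity
    have hnp : (0:ℝ) < n^(l-3-i) := by positivity
    field_simp
    ring
  rw [Finset.sum_congr rfl hstep, Finset.sum_range_sub]
  have h0 : u 0 = 1/((m+n)*m*n^(l-2)) := by simp [hu]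
  have hl2 : u (l-2) = 1/((m+n)*m^(l-1)) := by
    have e5 : l - 2 - (l-2) = 0 := by omega
    have e6 : l - 2 + 1 = l - 1 := by omega
    have hev2 : Even (l-2) := Nat.even_iff.mpr (by omega)
    simp [hu, e5, e6, hev2.neg_one_pow]
  rw [h0, hl2]

lemma hasSum_telescope (g : ℕ → ℝ) (k : ℕ) (h0 : Tendsto g atTop (𝓝 0)) (hm : Antitone g) :
    HasSum (fun p => g p - g (p+k)) (∑ j ∈ Finset.range k, g j) := by
  rw [hasSum_iff_tendsto_nat_of_nonneg (fun i => sub_nonneg.2 (hm (Nat.le_add_right i k))) _]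
  have key : ∀ N : ℕ, ∑ p ∈ Finset.range N, (g p - g (p+k))
      = ∑ j ∈ Finset.range k, g j - ∑ j ∈ Finset.range k, g (N+j) := by
    intro N
    have h1 : ∑ x ∈ Finset.range (N+k), g x
        = ∑ x ∈ Finset.range N, g x + ∑ x ∈ Finset.range k, g (N+x) :=
      Finset.sum_range_add g N k
    have h2 : ∑ x ∈ Finset.range (k+N), g x
        = ∑ x ∈ Finset.range k, g x + ∑ x ∈ Finset.range N, g (k+x) :=
      Finset.sum_range_add g k N
    rw [Nat.add_comm N k] at h1
    rw [Finset.sum_sub_distrib]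
    have h3 : ∑ p ∈ Finset.range N, g (p+k) = ∑ p ∈ Finset.range N, g (k+p) := by
      refine Finset.sum_congr rfl (fun p _ => by rw [Nat.add_comm])
    rw [h3]
    linarith [h1, h2]
  simp only [key]
  have hz : Tendsto (fun N => ∑ j ∈ Finset.range k, g (N+j)) atTop (𝓝 0) := by
    have : Tendsto (fun N => ∑ j ∈ Finset.range k, g (N+j)) atTop
        (𝓝 (∑ j ∈ Finset.range k, (0:ℝ))) := by
      refine tendsto_finset_sum _ (fun j _ => ?_)
      exact h0.comp (tendsto_add_atTop_nat j)
    simpa using this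
  simpa using (tendsto_const_nhds (x := ∑ j ∈ Finset.range k, g j)).sub hz

lemma d_eq (n : ℕ+) : ∑' p : ℕ+, (1/((n:ℝ)+(p:ℕ)) - 1/(2*(n:ℝ)+(p:ℕ)))
    = ∑ j ∈ Finset.range (n:ℕ), 1/((n:ℝ)+1+j) := by
  have hg : ∀ c : ℝ, 0 < c → Antitone (fun j : ℕ => 1/(c+(j:ℕ))) := by
    intro c hc a b hab
    have : (a:ℝ) ≤ b := by exact_mod_cast hab
    apply one_div_le_one_div_of_le <;> [positivity; linarith]
  have h0 : Tendsto (fun j : ℕ => 1/((n:ℝ)+1+(j:ℕ))) atTop (𝓝 0) := by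
    have h1 : Tendsto (fun j : ℕ => (n:ℝ)+1+(j:ℕ)) atTop atTop :=
      tendsto_atTop_add_const_left _ _ tendsto_natCast_atTop_atTop
    simpa [one_div, Pi.inv_def] using h1.inv_tendsto_atTop
  have hs := hasSum_telescope (fun j : ℕ => 1/((n:ℝ)+1+(j:ℕ))) (n:ℕ) h0 (hg _ (by positivity))
  rw [← Equiv.pnatEquivNat.symm.tsum_eq]
  rw [← hs.tsum_eq]
  congr 1
  funext j
  have hj : ((Equiv.pnatEquivNat.symm j : ℕ+):ℕ) = j + 1 := rfl
  rw [hj]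
  push_cast
  ring_nf

def eA : (Σ m : ℕ+, {n : ℕ+ // n < m}) ≃ PP where
  toFun x := ⟨(x.1, x.2.1), x.2.2⟩
  invFun q := ⟨q.1.1, q.1.2, q.2⟩
  left_inv x := rfl
  right_inv q := rfl

def finEquiv (m : ℕ+) : Fin ((m:ℕ)-1) ≃ {n : ℕ+ // n < m} where
  toFun j := ⟨⟨(j:ℕ)+1, Nat.succ_pos _⟩, by
    have hj := j.2
    refine (PNat.coe_lt_coe _ _).mp ?_
    simp only [PNat.mk_coe]
    omega⟩
  invFun n := ⟨(n.1:ℕ)-1, by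
    obtain ⟨⟨k, hk⟩, hlt⟩ := n
    have h := (PNat.coe_lt_coe _ _).mpr hlt
    simp only [PNat.mk_coe] at h ⊢
    omega⟩
  left_inv j := by
    ext
    simp only [PNat.mk_coe]
    omega
  right_inv n := by
    obtain ⟨⟨k, hk⟩, hlt⟩ := n
    ext
    refine Subtype.ext ?_
    simp only [PNat.mk_coe]
    omega

def eB : ℕ+ × ℕ+ ≃ PP where
  toFun x := ⟨(x.1 + x.2, x.1), by
    rw [← PNat.coe_lt_coe]
    simp only [PNat.add_coe]
    have := x.2.pos
    omega⟩
  invFun q := (q.1.2, q.1.1 - q.1.2)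
  left_inv x := by
    have h : (x.1 + x.2) - x.1 = x.2 := by
      have := PNat.add_sub_of_lt (a := x.1) (b := x.1 + x.2) (by
        rw [← PNat.coe_lt_coe]
        simp only [PNat.add_coe]
        have := x.2.pos
        omega)
      exact add_left_cancel this
    simp [Prod.ext_iff, h]
  right_inv q := by
    have h := PNat.add_sub_of_lt q.2
    exact Subtype.ext (Prod.ext_iff.mpr ⟨h, rfl⟩)

noncomputable def cc (m : ℕ+) : ℝ := ∑ j ∈ Finset.range ((m:ℕ)-1), 1/((m:ℝ)+1+j)
noncomputable def ww (m : ℕ+) : ℝ := ∑ j ∈ Finset.range ((m:ℕ)), 1/((m:ℝ)+1+j)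

lemma A_eval (l : ℕ) (hl : 4 ≤ l) :
    ∑' q : PP, 1 / (((q.1.1 : ℝ) + (q.1.2:ℝ)) * (q.1.1 : ℝ) ^ (l-1))
      = ∑' m : ℕ+, (1/(m:ℝ)^(l-1)) * cc m := by
  set f : PP → ℝ := fun q => 1 / (((q.1.1 : ℝ) + (q.1.2:ℝ)) * (q.1.1 : ℝ) ^ (l-1)) with hf
  have hsumA : Summable (fun x : (Σ m : ℕ+, {n : ℕ+ // n < m}) => f (eA x)) :=
    eA.summable_iff.mpr (summable_fA l hl)
  have hinner : ∀ m : ℕ+, ∑' n : {n : ℕ+ // n < m}, f (eA ⟨m, n⟩)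
      = (1/(m:ℝ)^(l-1)) * cc m := by
    intro m
    have hm1 : (1:ℝ) ≤ (m:ℝ) := by exact_mod_cast m.one_le
    set G : ℕ → ℝ := fun t => 1/(((m:ℝ) + ((t+1 : ℕ):ℝ)) * (m:ℝ)^(l-1)) with hG
    rw [← (finEquiv m).tsum_eq, tsum_fintype]
    have h1 : ∑ j : Fin ((m:ℕ)-1), f (eA ⟨m, finEquiv m j⟩)
        = ∑ j : Fin ((m:ℕ)-1), G (j:ℕ) := Finset.sum_congr rfl (fun j _ => rfl)
    rw [h1, Fin.sum_univ_eq_sum_range G]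
    rw [cc, Finset.mul_sum]
    refine Finset.sum_congr rfl (fun t _ => ?_)
    have h2 : ((m:ℝ) + ((t+1:ℕ):ℝ)) ≠ 0 := by push_cast; positivity
    have h3 : (m:ℝ)^(l-1) ≠ 0 := by positivity
    rw [hG]
    have h4 : (m:ℝ)+1+(t:ℝ) ≠ 0 := by positivity
    field_simp
    push_cast
    ring
  rw [← eA.tsum_eq f, Summable.tsum_sigma hsumA]
  exact tsum_congr hinner

lemma B_eval (l : ℕ) (hl : 4 ≤ l) :
    ∑' q : PP, 1 / (((q.1.1 : ℝ) + (q.1.2:ℝ)) * (q.1.1 : ℝ) * (q.1.2:ℝ)^(l-2))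
      = ∑' n : ℕ+, (1/(n:ℝ)^(l-1)) * ww n := by
  set f : PP → ℝ := fun q => 1 / (((q.1.1 : ℝ) + (q.1.2:ℝ)) * (q.1.1 : ℝ) * (q.1.2:ℝ)^(l-2)) with hf
  have hsumB : Summable (fun x : ℕ+ × ℕ+ => f (eB x)) :=
    eB.summable_iff.mpr (summable_fB l hl)
  have hinner : ∀ n : ℕ+, ∑' p : ℕ+, f (eB (n, p)) = (1/(n:ℝ)^(l-1)) * ww n := by
    intro n
    have hn1 : (1:ℝ) ≤ (n:ℝ) := by exact_mod_cast n.one_le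
    have hstep : ∀ p : ℕ+, f (eB (n, p))
        = (1/(n:ℝ)^(l-1)) * (1/((n:ℝ)+(p:ℕ)) - 1/(2*(n:ℝ)+(p:ℕ))) := by
      intro p
      have hp1 : (1:ℝ) ≤ ((p:ℕ):ℝ) := by exact_mod_cast p.one_le
      have e1 : f (eB (n, p)) = 1 / ((((n:ℝ)+(p:ℕ)) + (n:ℝ)) * ((n:ℝ)+(p:ℕ)) * (n:ℝ)^(l-2)) := by
        show (1 : ℝ) / ((((n + p : ℕ+):ℝ) + (n:ℝ)) * ((n + p : ℕ+):ℝ) * (n:ℝ)^(l-2)) = _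
        norm_cast
      rw [e1]
      have hnl : (n:ℝ)^(l-1) = (n:ℝ)^(l-2) * (n:ℝ) := by
        rw [← pow_succ]
        congr 1
        omega
      have c1 : (0:ℝ) < (n:ℝ)+(p:ℕ) := by linarith
      have c2 : (0:ℝ) < 2*(n:ℝ)+(p:ℕ) := by linarith
      have c3 : (0:ℝ) < (n:ℝ)^(l-2) := by positivity
      have c4 : (0:ℝ) < (n:ℝ)^(l-1) := by positivity
      rw [hnl]
      field_simp
      ring
    rw [tsum_congr hstep, tsum_mul_left, d_eq n]
    rfl
  rw [← eB.tsum_eq f, Summable.tsum_prod hsumB]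
  exact tsum_congr hinner

lemma summable_group (l : ℕ) (hl : 4 ≤ l) (v : ℕ+ → ℝ) (hv0 : ∀ m, 0 ≤ v m)
    (hv : ∀ m, v m ≤ (m:ℝ)) :
    Summable (fun m : ℕ+ => (1/(m:ℝ)^(l-1)) * v m) := by
  refine Summable.of_nonneg_of_le (fun m => by
    have := hv0 m
    positivity) (fun m => ?_) summable_pnat_sq
  have hm1 : (1:ℝ) ≤ (m:ℝ) := by exact_mod_cast m.one_le
  have h1 : (1/(m:ℝ)^(l-1)) * v m ≤ (1/(m:ℝ)^(l-1)) * (m:ℝ) :=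
    mul_le_mul_of_nonneg_left (hv m) (by positivity)
  refine h1.trans ?_
  rw [div_mul_eq_mul_div, one_mul, div_le_div_iff₀ (by positivity) (by positivity)]
  calc (m:ℝ) * (m:ℝ)^2 = (m:ℝ)^3 := by ring
    _ ≤ (m:ℝ)^(l-1) := pow_le_pow_right₀ hm1 (by omega)
    _ = 1 * (m:ℝ)^(l-1) := (one_mul _).symm

lemma cc_le (m : ℕ+) : cc m ≤ (m:ℝ) := by
  have : ∀ j ∈ Finset.range ((m:ℕ)-1), 1/((m:ℝ)+1+j) ≤ 1 := by
    intro j _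
    have hm1 : (1:ℝ) ≤ (m:ℝ) := by exact_mod_cast m.one_le
    rw [div_le_one (by positivity)]
    have : (0:ℝ) ≤ (j:ℝ) := by positivity
    linarith
  refine (Finset.sum_le_sum this).trans ?_
  simp only [Finset.sum_const, Finset.card_range, nsmul_eq_mul, mul_one]
  have := m.property
  have : (((m:ℕ)-1 : ℕ):ℝ) ≤ ((m:ℕ):ℝ) := by exact_mod_cast Nat.sub_le _ _
  exact this

lemma ww_le (m : ℕ+) : ww m ≤ (m:ℝ) := by
  have : ∀ j ∈ Finset.range ((m:ℕ)), 1/((m:ℝ)+1+j) ≤ 1 := by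
    intro j _
    have hm1 : (1:ℝ) ≤ (m:ℝ) := by exact_mod_cast m.one_le
    rw [div_le_one (by positivity)]
    have : (0:ℝ) ≤ (j:ℝ) := by positivity
    linarith
  refine (Finset.sum_le_sum this).trans ?_
  simp

lemma cc_nonneg (m : ℕ+) : 0 ≤ cc m := by
  refine Finset.sum_nonneg (fun j _ => ?_)
  have hm1 : (1:ℝ) ≤ (m:ℝ) := by exact_mod_cast m.one_le
  positivity

lemma ww_nonneg (m : ℕ+) : 0 ≤ ww m := by
  refine Finset.sum_nonneg (fun j _ => ?_)
  have hm1 : (1:ℝ) ≤ (m:ℝ) := by exact_mod_cast m.one_le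
  positivity

lemma main_real (l : ℕ) (hl : 4 ≤ l) (hev : l % 2 = 0) :
    ∑ l₁ ∈ Finset.Icc 2 (l - 1), (-1 : ℝ) ^ (l₁ - 1) * dzeta l₁ (l - l₁)
      = -(zetav l) / 2 := by
  -- step 1: move the finite sum inside the tsum
  have step1 : ∑ l₁ ∈ Finset.Icc 2 (l - 1), (-1 : ℝ) ^ (l₁ - 1) * dzeta l₁ (l - l₁)
      = ∑' q : PP, ∑ a ∈ Finset.Icc 2 (l-1),
          (-1:ℝ)^(a-1) * (1 / ((q.1.1 : ℝ) ^ a * (q.1.2 : ℝ) ^ (l - a))) := by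
    rw [Summable.tsum_finsetSum (fun a ha => ((summable_fa l a hl ha).mul_left _))]
    refine Finset.sum_congr rfl (fun a _ => ?_)
    rw [tsum_mul_left]
    rfl
  -- step 2: pointwise telescoping
  have step2 : ∀ q : PP, ∑ a ∈ Finset.Icc 2 (l-1),
      (-1:ℝ)^(a-1) * (1 / ((q.1.1 : ℝ) ^ a * (q.1.2 : ℝ) ^ (l - a)))
      = 1 / (((q.1.1 : ℝ) + (q.1.2:ℝ)) * (q.1.1 : ℝ) ^ (l-1))
        - 1 / (((q.1.1 : ℝ) + (q.1.2:ℝ)) * (q.1.1 : ℝ) * (q.1.2:ℝ)^(l-2)) := by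
    intro q
    obtain ⟨hn, hnm⟩ := q_facts q
    exact inner_eq l hl hev (hn.trans hnm) hn
  rw [step1, tsum_congr step2, Summable.tsum_sub (summable_fA l hl) (summable_fB l hl),
    A_eval l hl, B_eval l hl]
  have hA := summable_group l hl cc cc_nonneg cc_le
  have hB := summable_group l hl ww ww_nonneg ww_le
  rw [← Summable.tsum_sub hA hB]
  have key : ∀ m : ℕ+, (1/(m:ℝ)^(l-1)) * cc m - (1/(m:ℝ)^(l-1)) * ww m
      = (-(1:ℝ)/2) * (1 / (m:ℝ)^l) := by
    intro m
    have hm1 : (1:ℝ) ≤ (m:ℝ) := by exact_mod_cast m.one_le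
    have hmn : (m:ℕ) = ((m:ℕ)-1) + 1 := by
      have h1 := m.pos
      have h2 := m.property
      omega
    have hww : ww m = cc m + 1/((m:ℝ)+1+(((m:ℕ)-1 : ℕ):ℝ)) := by
      rw [ww, cc, hmn]
      rw [Finset.sum_range_succ]
      push_cast [Nat.cast_sub m.property]
      simp only [one_div]
    have hcast : (((m:ℕ)-1 : ℕ):ℝ) = (m:ℝ) - 1 := by
      exact Nat.cast_pred m.property
    rw [hww, hcast]
    have h2m : (m:ℝ)+1+((m:ℝ)-1) = 2*(m:ℝ) := by ring
    rw [h2m]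
    have hml : (m:ℝ)^l = (m:ℝ)^(l-1) * (m:ℝ) := by
      rw [← pow_succ]
      congr 1
      omega
    rw [hml]
    have hp : (0:ℝ) < (m:ℝ)^(l-1) := by positivity
    field_simp
    ring
  rw [tsum_congr key, tsum_mul_left]
  rw [zetav]
  ring


theorem stmt13 (l : ℕ) (hl : 4 ≤ l) (hev : l % 2 = 0) :
    Tl l (-1) 1 = -(zetav l : ℂ) / 2 ∧
    ∑ l₁ ∈ Finset.Icc 2 (l - 1), (-1 : ℝ) ^ (l₁ - 1) * dzeta l₁ (l - l₁)
      = -(zetav l) / 2 := by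
  have h2 := main_real l hl hev
  constructor
  · rw [Tl]
    have hc : ∀ a ∈ Finset.Icc 2 (l-1), ((-1:ℂ))^(a-1) * 1^(l-a-1) * (dzeta a (l-a):ℂ)
        = (((-1:ℝ)^(a-1) * dzeta a (l-a) : ℝ) : ℂ) := by
      intro a _
      push_cast
      ring
    rw [Finset.sum_congr rfl hc, ← Complex.ofReal_sum, h2]
    push_cast
    ring
  · exact h2
end
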